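/- arXiv:2006.16398 — 2 statements merged into one kernel-verified Lean document; each statement's English description precedes it below -/
import Mathlib

section
/- (Proposition 9) Suppose φ'' ∈ WLSC(α−2, c, x₀) for some c ∈ (0,1], x₀ ≥ 0 and α > 0. Then there is a constant C > 0 such that for all x > x₀, x φ'(x) − φ(x) ≤ C x² φ''(x). -/
open MeasureTheory Real Set Filter

noncomputable section

/-- Weak lower scaling property at infinity: `f(l*x) ≥ c * l^τ * f(x)` for `l ≥ 1`, `x > x₁`. -/
def WLSC (f : ℝ → ℝ) (τ c x₁ : ℝ) : Prop :=
  ∀ l : ℝ, 1 ≤ l → ∀ x : ℝ, x₁ < x → c * l ^ τ * f x ≤ f (l * x)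

/-- Weak upper scaling property at infinity: `f(l*x) ≤ C * l^τ * f(x)` for `l ≥ 1`, `x > x₁`. -/
def WUSC (f : ℝ → ℝ) (τ C x₁ : ℝ) : Prop :=
  ∀ l : ℝ, 1 ≤ l → ∀ x : ℝ, x₁ < x → f (l * x) ≤ C * l ^ τ * f x

/-- The Pruitt function `K(r) = σ²/r² + r⁻² ∫_{(0,r)} s² ν(ds)`. -/
def pruittK (σ : ℝ) (ν : Measure ℝ) (r : ℝ) : ℝ :=
  σ ^ 2 / r ^ 2 + (∫ s in Ioo (0:ℝ) r, s ^ 2 ∂ν) / r ^ 2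

/-- The Pruitt function `h(r) = σ²/r² + ∫_{(0,∞)} min(1, s²/r²) ν(ds)`. -/
def pruittH (σ : ℝ) (ν : Measure ℝ) (r : ℝ) : ℝ :=
  σ ^ 2 / r ^ 2 + ∫ s in Ioi (0:ℝ), min 1 (s ^ 2 / r ^ 2) ∂ν

/-- The real part of the characteristic exponent:
`Re ψ(ξ) = σ²ξ² + ∫_{(0,∞)} (1 − cos(ξx)) ν(dx)`. -/
def rePsi (σ : ℝ) (ν : Measure ℝ) (ξ : ℝ) : ℝ :=
  σ ^ 2 * ξ ^ 2 + ∫ x in Ioi (0:ℝ), (1 - Real.cos (ξ * x)) ∂ν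

/-- `ψ*(r) = sup_{|z| ≤ r} Re ψ(z)`. -/
def psiStar (σ : ℝ) (ν : Measure ℝ) (r : ℝ) : ℝ :=
  sSup (rePsi σ ν '' {z : ℝ | |z| ≤ r})

/-- `ψ⁻¹(s) = sup{r > 0 : ψ*(r) = s}`. -/
def psiInv (σ : ℝ) (ν : Measure ℝ) (s : ℝ) : ℝ :=
  sSup {r : ℝ | 0 < r ∧ psiStar σ ν r = s}

/-- `Φ(x) = x² φ''(x)`. -/
def bigPhi (φ'' : ℝ → ℝ) (x : ℝ) : ℝ := x ^ 2 * φ'' x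

/-- `Φ*(r) = sup_{0 < s ≤ r} Φ(s)`. -/
def bigPhiStar (φ'' : ℝ → ℝ) (r : ℝ) : ℝ := sSup (bigPhi φ'' '' Ioc (0:ℝ) r)

/-- `Φ⁻¹(s) = sup{r > 0 : Φ*(r) = s}`. -/
def bigPhiInv (φ'' : ℝ → ℝ) (s : ℝ) : ℝ := sSup {r : ℝ | 0 < r ∧ bigPhiStar φ'' r = s}

/-- The characteristic (Lévy–Khintchine) exponent
`ψ(ξ) = σ²ξ² − ibξ − ∫_{(0,∞)} (e^{iξx} − 1 − iξx 1_{x<1}) ν(dx)`. -/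
def charExp (σ b : ℝ) (ν : Measure ℝ) (ξ : ℝ) : ℂ :=
  (σ : ℂ) ^ 2 * (ξ : ℂ) ^ 2 - Complex.I * (b : ℂ) * (ξ : ℂ) -
    ∫ x in Ioi (0:ℝ), (Complex.exp (Complex.I * (ξ : ℂ) * (x : ℂ)) - 1 -
      Complex.I * (ξ : ℂ) * (x : ℂ) * (if x < 1 then (1:ℂ) else 0)) ∂ν

/-- The holomorphic extension of the Laplace exponent to `{Re z > 0}`. -/
def laplaceC (σ b : ℝ) (ν : Measure ℝ) (z : ℂ) : ℂ :=
  (σ : ℂ) ^ 2 * z ^ 2 - (b : ℂ) * z +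
    ∫ x in Ioi (0:ℝ), (Complex.exp (-(z * (x : ℂ))) - 1 +
      z * (x : ℂ) * (if x < 1 then (1:ℂ) else 0)) ∂ν

/-- `b_r = b + ∫_{(0,∞)} s (1_{s<r} − 1_{s<1}) ν(ds)`. -/
def brFn (b : ℝ) (ν : Measure ℝ) (r : ℝ) : ℝ :=
  b + ∫ s in Ioi (0:ℝ), s * ((if s < r then (1:ℝ) else 0) - (if s < 1 then (1:ℝ) else 0)) ∂ν

/-- The majorant `η`: `η(0) = ∞`, `η(s) = s⁻¹ Φ*(1/s)` for `0 < s < 1/x₀`,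
and `η(s) = A s⁻¹ |φ(1/s)|` for `s ≥ 1/x₀`, where `A = Φ*(x₀)/|φ(x₀)|`. -/
def etaFn (φ φ'' : ℝ → ℝ) (x₀ : ℝ) (s : ℝ) : ENNReal :=
  if s ≤ 0 then ⊤
  else if x₀ * s < 1 then ENNReal.ofReal (s⁻¹ * bigPhiStar φ'' s⁻¹)
  else ENNReal.ofReal ((bigPhiStar φ'' x₀ / |φ x₀|) * s⁻¹ * |φ s⁻¹|)


set_option maxHeartbeats 1000000 in
/-- Proposition 9. -/
theorem statement10
    (ν : Measure ℝ) [SigmaFinite ν]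
    (hint : ∫⁻ x in Ioi (0:ℝ), ENNReal.ofReal (min 1 (x ^ 2)) ∂ν ≠ ⊤)
    (σ b : ℝ) (hσ : 0 ≤ σ)
    (φ φ' φ'' : ℝ → ℝ)
    (hφ : ∀ l : ℝ, 0 ≤ l → φ l = σ ^ 2 * l ^ 2 - b * l +
      ∫ x in Ioi (0:ℝ), (Real.exp (-(l * x)) - 1 + l * x * (if x < 1 then 1 else 0)) ∂ν)
    (hD1 : ∀ x : ℝ, 0 < x → HasDerivAt φ (φ' x) x)
    (hD2 : ∀ x : ℝ, 0 < x → HasDerivAt φ' (φ'' x) x)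
    (hφ'' : ∀ l : ℝ, 0 < l → φ'' l = 2 * σ ^ 2 + ∫ x in Ioi (0:ℝ), x ^ 2 * Real.exp (-(l * x)) ∂ν)
    (α c x₀ : ℝ) (hα : 0 < α) (hc : c ∈ Ioc (0:ℝ) 1) (hx₀ : 0 ≤ x₀)
    (hscal : WLSC φ'' (α - 2) c x₀) :
    ∃ C : ℝ, 0 < C ∧ ∀ x : ℝ, x₀ < x →
      x * φ' x - φ x ≤ C * (x ^ 2 * φ'' x) := by
  obtain ⟨hc0, hc1⟩ := hc
  -- integrability of the dominating function
  have hminmeas : Measurable fun x : ℝ => min 1 (x ^ 2) :=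
    measurable_const.min (measurable_id.pow_const 2)
  have hminnn : ∀ x : ℝ, 0 ≤ min 1 (x ^ 2) := fun x => le_min zero_le_one (sq_nonneg x)
  have hmin_int : IntegrableOn (fun x : ℝ => min 1 (x ^ 2)) (Ioi 0) ν := by
    refine ⟨hminmeas.aestronglyMeasurable, ?_⟩
    rw [hasFiniteIntegral_iff_ofReal (Filter.Eventually.of_forall hminnn)]
    exact lt_top_iff_ne_top.mpr hint
  -- integrability of x ↦ x² e^{-lx}
  have hexp_int : ∀ l : ℝ, 0 < l →
      IntegrableOn (fun x : ℝ => x ^ 2 * Real.exp (-(l * x))) (Ioi 0) ν := by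
    intro l hl
    have hmeas : Measurable fun x : ℝ => x ^ 2 * Real.exp (-(l * x)) :=
      (measurable_id.pow_const 2).mul ((measurable_const.mul measurable_id).neg.exp)
    refine (hmin_int.const_mul (max 1 (27 / l ^ 3))).mono hmeas.aestronglyMeasurable ?_
    filter_upwards [ae_restrict_mem measurableSet_Ioi] with x hx
    have hx0 : (0:ℝ) < x := hx
    have hM1 : (1:ℝ) ≤ max 1 (27 / l ^ 3) := le_max_left _ _
    have hM2 : 27 / l ^ 3 ≤ max 1 (27 / l ^ 3) := le_max_right _ _
    rw [Real.norm_eq_abs, Real.norm_eq_abs,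
      abs_of_nonneg (mul_nonneg (sq_nonneg x) (Real.exp_pos _).le),
      abs_of_nonneg (mul_nonneg (by positivity) (hminnn x))]
    rcases le_or_gt x 1 with h1 | h1
    · have : min 1 (x ^ 2) = x ^ 2 := min_eq_right (by nlinarith)
      rw [this]
      have he : Real.exp (-(l * x)) ≤ 1 := Real.exp_le_one_iff.mpr (by nlinarith)
      nlinarith [sq_nonneg x]
    · have hmin : min 1 (x ^ 2) = 1 := min_eq_left (by nlinarith)
      rw [hmin, mul_one]
      -- x² e^{-lx} ≤ 27 / l³
      have hcube : l ^ 3 * x ^ 3 / 27 ≤ Real.exp (l * x) := by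
        have h3 : l * x / 3 + 1 ≤ Real.exp (l * x / 3) := Real.add_one_le_exp _
        have hexp3 : Real.exp (l * x) = Real.exp (l * x / 3) ^ 3 := by
          rw [← Real.exp_nat_mul]; ring_nf
        rw [hexp3]
        have hpos : (0:ℝ) ≤ l * x / 3 := by positivity
        nlinarith [pow_le_pow_left₀ (by positivity : (0:ℝ) ≤ l * x / 3 + 1) h3 3,
          sq_nonneg (l * x / 3)]
      have hexppos : (0:ℝ) < Real.exp (l * x) := Real.exp_pos _
      have hxx : x ^ 2 * Real.exp (-(l * x)) = x ^ 2 / Real.exp (l * x) := by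
        rw [Real.exp_neg]; ring
      rw [hxx]
      have h27 : x ^ 2 / Real.exp (l * x) ≤ 27 / (l ^ 3 * x) := by
        rw [div_le_div_iff₀ hexppos (by positivity)]
        nlinarith [hcube]
      have h27' : 27 / (l ^ 3 * x) ≤ 27 / l ^ 3 := by
        apply div_le_div_of_nonneg_left (by norm_num) (by positivity)
        nlinarith [pow_pos hl 3]
      linarith
  -- φ'' is nonnegative on (0,∞)
  have hφ''nn : ∀ l : ℝ, 0 < l → 0 ≤ φ'' l := by
    intro l hl
    rw [hφ'' l hl]
    have h1 : 0 ≤ ∫ x in Ioi (0:ℝ), x ^ 2 * Real.exp (-(l * x)) ∂ν :=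
      setIntegral_nonneg measurableSet_Ioi fun x _ =>
        mul_nonneg (sq_nonneg x) (Real.exp_pos _).le
    nlinarith [sq_nonneg σ]
  -- φ'' is antitone on (0,∞)
  have hφ''anti : ∀ a b : ℝ, 0 < a → a ≤ b → φ'' b ≤ φ'' a := by
    intro a b ha hab
    rw [hφ'' a ha, hφ'' b (lt_of_lt_of_le ha hab)]
    have : (∫ x in Ioi (0:ℝ), x ^ 2 * Real.exp (-(b * x)) ∂ν) ≤
        ∫ x in Ioi (0:ℝ), x ^ 2 * Real.exp (-(a * x)) ∂ν := by
      refine setIntegral_mono_on (hexp_int b (lt_of_lt_of_le ha hab)) (hexp_int a ha)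
        measurableSet_Ioi ?_
      intro x hx
      have hx0 : (0:ℝ) < x := hx
      exact mul_le_mul_of_nonneg_left (Real.exp_le_exp.mpr (by nlinarith)) (sq_nonneg x)
    linarith
  -- interval integrability of φ''
  have hφ''ii : ∀ t x : ℝ, 0 < t → t ≤ x → IntervalIntegrable φ'' volume t x := by
    intro t x ht htx
    refine AntitoneOn.intervalIntegrable ?_
    rw [uIcc_of_le htx]
    intro a ha b hb hab
    exact hφ''anti a b (lt_of_lt_of_le ht ha.1) hab
  -- FTC for G(y) = y φ'(y) - φ(y)
  have hG : ∀ t x : ℝ, 0 < t → t ≤ x →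
      x * φ' x - φ x - (t * φ' t - φ t) = ∫ s in t..x, s * φ'' s := by
    intro t x ht htx
    have h1 : ∀ s ∈ uIcc t x, HasDerivAt (fun y => y * φ' y - φ y) (s * φ'' s) s := by
      intro s hs
      rw [uIcc_of_le htx] at hs
      have hs0 : 0 < s := lt_of_lt_of_le ht hs.1
      have h := ((hasDerivAt_id s).mul (hD2 s hs0)).sub (hD1 s hs0)
      have heq : 1 * φ' s + id s * φ'' s - φ' s = s * φ'' s := by
        simp only [id_eq]; ring
      rw [heq] at h
      exact h
    have h2 : IntervalIntegrable (fun s => s * φ'' s) volume t x :=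
      (hφ''ii t x ht htx).continuousOn_mul continuousOn_id
    rw [intervalIntegral.integral_eq_sub_of_hasDerivAt h1 h2]
  -- the scaling bound on the integral
  have hIbound : ∀ t x : ℝ, x₀ < t → t ≤ x →
      (∫ s in t..x, s * φ'' s) ≤ (c * α)⁻¹ * (x ^ 2 * φ'' x) := by
    intro t x ht htx
    have ht0 : 0 < t := lt_of_le_of_lt hx₀ ht
    have hx0 : 0 < x := lt_of_lt_of_le ht0 htx
    have hxnn := hφ''nn x hx0
    set P := φ'' x with hP
    -- pointwise bound
    have hpt : ∀ s ∈ Icc t x, s * φ'' s ≤ c⁻¹ * x ^ (2 - α) * P * s ^ (α - 1) := by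
      intro s hs
      have hs0 : 0 < s := lt_of_lt_of_le ht0 hs.1
      have hsx : s ≤ x := hs.2
      have hl1 : (1:ℝ) ≤ x / s := (one_le_div hs0).mpr hsx
      have hL : (0:ℝ) < (x / s) ^ (α - 2) := Real.rpow_pos_of_pos (by positivity) _
      have h := hscal (x / s) hl1 s (lt_of_lt_of_le ht hs.1)
      rw [div_mul_cancel₀ _ (ne_of_gt hs0)] at h
      -- φ'' s ≤ c⁻¹ (x/s)^(2-α) P
      have key : φ'' s ≤ c⁻¹ * ((x / s) ^ (α - 2))⁻¹ * P := by
        have hcL : (0:ℝ) < c * (x / s) ^ (α - 2) := by positivity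
        have h2 : (c * (x / s) ^ (α - 2))⁻¹ * (c * (x / s) ^ (α - 2) * φ'' s)
            ≤ (c * (x / s) ^ (α - 2))⁻¹ * P :=
          mul_le_mul_of_nonneg_left h (inv_nonneg.mpr hcL.le)
        calc φ'' s = (c * (x / s) ^ (α - 2))⁻¹ * (c * (x / s) ^ (α - 2) * φ'' s) := by
              field_simp
          _ ≤ (c * (x / s) ^ (α - 2))⁻¹ * P := h2
          _ = c⁻¹ * ((x / s) ^ (α - 2))⁻¹ * P := by rw [mul_inv]
      have hkey2 : s * φ'' s ≤ s * (c⁻¹ * ((x / s) ^ (α - 2))⁻¹ * P) :=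
        mul_le_mul_of_nonneg_left key hs0.le
      refine hkey2.trans (le_of_eq ?_)
      have e1 : ((x / s) ^ (α - 2))⁻¹ = (s / x) ^ (α - 2) := by
        rw [← Real.inv_rpow (by positivity), inv_div]
      have e2 : (s / x) ^ (α - 2) = s ^ (α - 2) / x ^ (α - 2) :=
        Real.div_rpow hs0.le hx0.le (α - 2)
      have e3 : s ^ (α - 1) = s * s ^ (α - 2) := by
        have h31 : α - 1 = 1 + (α - 2) := by ring
        rw [h31, Real.rpow_add hs0, Real.rpow_one]
      have e4 : x ^ (2 - α) = (x ^ (α - 2))⁻¹ := by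
        have h41 : (2 - α) = -(α - 2) := by ring
        rw [h41, Real.rpow_neg hx0.le]
      rw [e1, e2, e4, e3]
      ring
    -- integrate
    have hii2 : IntervalIntegrable (fun s => c⁻¹ * x ^ (2 - α) * P * s ^ (α - 1))
        volume t x := by
      apply ContinuousOn.intervalIntegrable
      have hcr : ContinuousOn (fun s : ℝ => s ^ (α - 1)) (uIcc t x) := by
        intro s hs
        rw [uIcc_of_le htx] at hs
        exact ((Real.continuousAt_rpow_const s (α-1)
          (Or.inl (ne_of_gt (lt_of_lt_of_le ht0 hs.1)))).continuousWithinAt)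
      exact continuousOn_const.mul hcr
    have hii1 : IntervalIntegrable (fun s => s * φ'' s) volume t x :=
      (hφ''ii t x ht0 htx).continuousOn_mul continuousOn_id
    have hmono := intervalIntegral.integral_mono_on htx hii1 hii2 hpt
    refine hmono.trans ?_
    rw [intervalIntegral.integral_const_mul, integral_rpow (Or.inl (by linarith))]
    have h1 : α - 1 + 1 = α := by ring
    rw [h1]
    have htα : (0:ℝ) ≤ t ^ α := (Real.rpow_pos_of_pos ht0 _).le
    have hxα : (0:ℝ) < x ^ α := Real.rpow_pos_of_pos hx0 _
    have hxa : x ^ (2 - α) * x ^ α = x ^ 2 := by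
      rw [← Real.rpow_add hx0]
      norm_num
    have hC : (0:ℝ) ≤ c⁻¹ * x ^ (2 - α) * P := by positivity
    calc c⁻¹ * x ^ (2 - α) * P * ((x ^ α - t ^ α) / α)
        ≤ c⁻¹ * x ^ (2 - α) * P * (x ^ α / α) := by
          apply mul_le_mul_of_nonneg_left _ hC
          have hdiv : x ^ α - t ^ α ≤ x ^ α := by linarith
          exact div_le_div_of_nonneg_right hdiv hα.le
      _ = (c * α)⁻¹ * (x ^ 2 * P) := by
          rw [mul_inv]
          field_simp
          nlinarith [hxa]
  -- G(t) ≤ φ(2t) - 2φ(t)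
  have hGle : ∀ t : ℝ, 0 < t → t * φ' t - φ t ≤ φ (2 * t) - 2 * φ t := by
    intro t ht
    have h2t : t ≤ 2 * t := by linarith
    have hmono : ∀ s ∈ Icc t (2 * t), φ' t ≤ φ' s := by
      intro s hs
      have hs0 : 0 < s := lt_of_lt_of_le ht hs.1
      have hFTC : (∫ u in t..s, φ'' u) = φ' s - φ' t := by
        apply intervalIntegral.integral_eq_sub_of_hasDerivAt
        · intro u hu
          rw [uIcc_of_le hs.1] at hu
          exact hD2 u (lt_of_lt_of_le ht hu.1)
        · exact hφ''ii t s ht hs.1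
      have hnn : 0 ≤ ∫ u in t..s, φ'' u := by
        apply intervalIntegral.integral_nonneg hs.1
        intro u hu
        exact hφ''nn u (lt_of_lt_of_le ht hu.1)
      linarith [hFTC ▸ hnn]
    have hφ'cont : ContinuousOn φ' (uIcc t (2 * t)) := by
      intro s hs
      rw [uIcc_of_le h2t] at hs
      exact ((hD2 s (lt_of_lt_of_le ht hs.1)).continuousAt).continuousWithinAt
    have hFTC : (∫ s in t..2 * t, φ' s) = φ (2 * t) - φ t := by
      apply intervalIntegral.integral_eq_sub_of_hasDerivAt
      · intro s hs
        rw [uIcc_of_le h2t] at hs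
        exact hD1 s (lt_of_lt_of_le ht hs.1)
      · exact hφ'cont.intervalIntegrable
    have hm : (∫ _ in t..2 * t, φ' t) ≤ ∫ s in t..2 * t, φ' s :=
      intervalIntegral.integral_mono_on h2t intervalIntegrable_const
        hφ'cont.intervalIntegrable hmono
    rw [intervalIntegral.integral_const, smul_eq_mul] at hm
    rw [hFTC] at hm
    have : (2 * t - t) * φ' t = t * φ' t := by ring
    rw [this] at hm
    linarith
  set A : ℝ := (c * α)⁻¹ with hAdef
  have hA : 0 < A := by positivity
  set K : ℝ := if x₀ = 0 then 0 else φ (2 * x₀) - 2 * φ x₀ with hKdef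
  -- limit of φ(2t) - 2φ(t) as t → x₀⁺ is K
  have hKlim : Tendsto (fun t => φ (2 * t) - 2 * φ t) (nhdsWithin x₀ (Ioi x₀)) (nhds K) := by
    rcases eq_or_lt_of_le hx₀ with h0 | h0
    · -- x₀ = 0 : use dominated convergence
      have hx₀0 : x₀ = 0 := h0.symm
      have hφ0 : Tendsto φ (nhdsWithin (0:ℝ) (Ioi 0)) (nhds 0) := by
        have hI : Tendsto (fun l => ∫ x in Ioi (0:ℝ),
            (Real.exp (-(l * x)) - 1 + l * x * (if x < 1 then 1 else 0)) ∂ν)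
            (nhdsWithin (0:ℝ) (Ioi 0)) (nhds 0) := by
          have hDCT := MeasureTheory.tendsto_integral_filter_of_dominated_convergence
            (μ := ν.restrict (Ioi (0:ℝ)))
            (F := fun (l : ℝ) (x : ℝ) =>
              Real.exp (-(l * x)) - 1 + l * x * (if x < 1 then (1:ℝ) else 0))
            (f := fun _ => (0:ℝ)) (l := nhdsWithin (0:ℝ) (Ioi 0))
            (fun x => min 1 (x ^ 2)) ?_ ?_ hmin_int ?_
          · simpa using hDCT
          · apply Filter.Eventually.of_forall
            intro l
            apply Measurable.aestronglyMeasurable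
            apply Measurable.add
            · exact ((measurable_const.mul measurable_id).neg.exp).sub measurable_const
            · exact ((measurable_const.mul measurable_id)).mul
                (Measurable.ite measurableSet_Iio measurable_const measurable_const)
          · filter_upwards [Ioc_mem_nhdsGT zero_lt_one] with l hl
            filter_upwards [ae_restrict_mem measurableSet_Ioi] with x hx
            have hx0 : (0:ℝ) < x := hx
            obtain ⟨hl0, hl1⟩ := hl
            rcases lt_or_ge x 1 with h1 | h1
            · rw [if_pos h1, mul_one, Real.norm_eq_abs]
              have hlx : |(-(l * x))| ≤ 1 := by
                rw [abs_neg, abs_of_nonneg (by positivity)]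
                nlinarith
              have := Real.abs_exp_sub_one_sub_id_le hlx
              have heq : Real.exp (-(l * x)) - 1 - -(l * x)
                  = Real.exp (-(l * x)) - 1 + l * x := by ring
              rw [heq] at this
              have hmin : min 1 (x ^ 2) = x ^ 2 := min_eq_right (by nlinarith)
              rw [hmin]
              have hle : (-(l * x)) ^ 2 ≤ x ^ 2 := by
                nlinarith [mul_nonneg (mul_nonneg (sub_nonneg.mpr hl1)
                  (by linarith : (0:ℝ) ≤ 1 + l)) (sq_nonneg x)]
              linarith
            · rw [if_neg (not_lt.mpr h1), mul_zero, add_zero, Real.norm_eq_abs]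
              have hmin : min 1 (x ^ 2) = 1 := min_eq_left (by nlinarith)
              rw [hmin]
              have he1 : Real.exp (-(l * x)) ≤ 1 := Real.exp_le_one_iff.mpr (by nlinarith)
              have he0 : 0 < Real.exp (-(l * x)) := Real.exp_pos _
              rw [abs_le]
              constructor <;> nlinarith
          · apply Filter.Eventually.of_forall
            intro x
            have hcont : Continuous (fun l : ℝ =>
                Real.exp (-(l * x)) - 1 + l * x * (if x < 1 then 1 else 0)) := by
              fun_prop
            have := (hcont.tendsto 0).mono_left
              (nhdsWithin_le_nhds (a := (0:ℝ)) (s := Ioi 0))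
            simpa using this
        have hpoly : Tendsto (fun l : ℝ => σ ^ 2 * l ^ 2 - b * l)
            (nhdsWithin (0:ℝ) (Ioi 0)) (nhds 0) := by
          have hcont : Continuous (fun l : ℝ => σ ^ 2 * l ^ 2 - b * l) := by fun_prop
          have := (hcont.tendsto 0).mono_left
            (nhdsWithin_le_nhds (a := (0:ℝ)) (s := Ioi 0))
          simpa using this
        have := hpoly.add hI
        rw [add_zero] at this
        apply this.congr'
        filter_upwards [self_mem_nhdsWithin] with l hl
        exact (hφ l (le_of_lt hl)).symm
      have h2 : Tendsto (fun t : ℝ => 2 * t) (nhdsWithin (0:ℝ) (Ioi 0))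
          (nhdsWithin (0:ℝ) (Ioi 0)) := by
        rw [tendsto_nhdsWithin_iff]
        constructor
        · have hco : Continuous (fun t : ℝ => 2 * t) := continuous_const.mul continuous_id
          have := (hco.tendsto 0).mono_left (nhdsWithin_le_nhds (a := (0:ℝ)) (s := Ioi 0))
          simpa using this
        · filter_upwards [self_mem_nhdsWithin] with t ht
          exact mul_pos two_pos (mem_Ioi.mp ht)
      have := (hφ0.comp h2).sub ((hφ0.const_mul 2))
      rw [hKdef, if_pos hx₀0, hx₀0]
      simpa using this
    · -- x₀ > 0 : continuity
      have hc1 : ContinuousAt φ x₀ := (hD1 x₀ h0).continuousAt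
      have hc2 : ContinuousAt φ (2 * x₀) := (hD1 (2 * x₀) (by linarith)).continuousAt
      have hct : ContinuousAt (fun t => φ (2 * t) - 2 * φ t) x₀ := by
        apply ContinuousAt.sub
        · exact hc2.comp (by fun_prop)
        · exact hc1.const_mul 2
      rw [hKdef, if_neg (ne_of_gt h0)]
      exact hct.tendsto.mono_left (nhdsWithin_le_nhds (a := x₀) (s := Ioi x₀))
  -- main bound : G x ≤ K + A Φ(x)
  have hmain : ∀ x : ℝ, x₀ < x → x * φ' x - φ x ≤ K + A * (x ^ 2 * φ'' x) := by
    intro x hx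
    have hx0 : 0 < x := lt_of_le_of_lt hx₀ hx
    have hev : ∀ᶠ t in nhdsWithin x₀ (Ioi x₀),
        x * φ' x - φ x - A * (x ^ 2 * φ'' x) ≤ φ (2 * t) - 2 * φ t := by
      filter_upwards [self_mem_nhdsWithin,
        (eventually_lt_nhds hx).filter_mono nhdsWithin_le_nhds] with t ht htx
      have ht' : x₀ < t := ht
      have ht0 : 0 < t := lt_of_le_of_lt hx₀ ht'
      have h1 := hG t x ht0 htx.le
      have h2 := hIbound t x ht' htx.le
      have h3 := hGle t ht0
      linarith
    have := ge_of_tendsto hKlim hev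
    linarith
  -- conclusion, splitting on the sign of K
  rcases le_or_gt K 0 with hK | hK
  · refine ⟨A, hA, fun x hx => ?_⟩
    have := hmain x hx
    linarith
  · -- K > 0 forces x₀ > 0 and φ''(2x₀) > 0
    have hx₀pos : 0 < x₀ := by
      rcases eq_or_lt_of_le hx₀ with h0 | h0
      · exfalso; rw [hKdef, if_pos h0.symm] at hK; exact lt_irrefl 0 hK
      · exact h0
    have h2x₀ : (0:ℝ) < 2 * x₀ := by linarith
    have hpp : 0 < φ'' (2 * x₀) := by
      rcases (hφ''nn (2 * x₀) h2x₀).lt_or_eq with h | h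
      · exact h
      · exfalso
        -- degenerate case : ν(0,∞) = 0 and σ = 0, so K = 0
        have hform := hφ'' (2 * x₀) h2x₀
        have hJnn : 0 ≤ ∫ x in Ioi (0:ℝ), x ^ 2 * Real.exp (-(2 * x₀ * x)) ∂ν :=
          setIntegral_nonneg measurableSet_Ioi fun x _ =>
            mul_nonneg (sq_nonneg x) (Real.exp_pos _).le
        have hσ2 : σ ^ 2 = 0 := le_antisymm (by linarith [sq_nonneg σ]) (sq_nonneg σ)
        have hσ0 : σ = 0 := (pow_eq_zero_iff two_ne_zero).mp hσ2
        have hJ0 : (∫ x in Ioi (0:ℝ), x ^ 2 * Real.exp (-(2 * x₀ * x)) ∂ν) = 0 :=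
          le_antisymm (by linarith [sq_nonneg σ]) hJnn
        have hae : (fun x : ℝ => x ^ 2 * Real.exp (-(2 * x₀ * x)))
            =ᵐ[ν.restrict (Ioi 0)] 0 := by
          rw [← MeasureTheory.integral_eq_zero_iff_of_nonneg
            (fun x => mul_nonneg (sq_nonneg x) (Real.exp_pos _).le) (hexp_int (2 * x₀) h2x₀)]
          exact hJ0
        have hν0 : ν (Ioi (0:ℝ)) = 0 := by
          have hsub : Ioi (0:ℝ) ⊆ {x : ℝ | ¬ (x ^ 2 * Real.exp (-(2 * x₀ * x)) = 0)} := by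
            intro x hx
            have hx0 : (0:ℝ) < x := hx
            simp only [mem_setOf_eq]
            positivity
          have := hae
          rw [Filter.EventuallyEq, ae_iff] at this
          have hle : ν.restrict (Ioi 0) (Ioi (0:ℝ)) ≤
              ν.restrict (Ioi 0) {x : ℝ | ¬ (x ^ 2 * Real.exp (-(2 * x₀ * x)) = 0)} :=
            measure_mono hsub
          simp only [Pi.zero_apply] at this
          rw [this] at hle
          rw [Measure.restrict_apply_self] at hle
          exact le_antisymm (by exact_mod_cast hle) zero_le
        have hzero : ∀ l : ℝ, 0 ≤ l → φ l = -(b * l) := by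
          intro l hl
          rw [hφ l hl, hσ0]
          rw [show ν.restrict (Ioi (0:ℝ)) = 0 from Measure.restrict_eq_zero.mpr hν0,
            MeasureTheory.integral_zero_measure]
          ring
        rw [hKdef, if_neg (ne_of_gt hx₀pos), hzero (2 * x₀) h2x₀.le,
          hzero x₀ hx₀pos.le] at hK
        nlinarith
    -- lower bound for Φ(x)
    set m : ℝ := c * x₀ ^ 2 * φ'' (2 * x₀) with hmdef
    have hm : 0 < m := by positivity
    have hΦm : ∀ x : ℝ, x₀ < x → m ≤ x ^ 2 * φ'' x := by
      intro x hx
      have hx0 : 0 < x := lt_of_le_of_lt hx₀ hx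
      rcases le_or_gt x (2 * x₀) with h2 | h2
      · have ha := hφ''anti x (2 * x₀) hx0 h2
        have hsq : x₀ ^ 2 ≤ x ^ 2 := by nlinarith
        have hPnn := hφ''nn (2 * x₀) h2x₀
        nlinarith [mul_le_mul hsq ha hPnn (sq_nonneg x),
          mul_nonneg (sub_nonneg.mpr hc1) (mul_nonneg (sq_nonneg x₀) hPnn)]
      · set l : ℝ := x / (2 * x₀) with hldef
        have hl1 : (1:ℝ) ≤ l := (one_le_div h2x₀).mpr h2.le
        have hl0 : (0:ℝ) < l := by linarith
        have hs := hscal l hl1 (2 * x₀) (by linarith)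
        rw [div_mul_cancel₀ _ (ne_of_gt h2x₀)] at hs
        have hexp : l ^ (-2 : ℝ) ≤ l ^ (α - 2) :=
          Real.rpow_le_rpow_of_exponent_le hl1 (by linarith)
        have hexp2 : l ^ (-2 : ℝ) = (l ^ 2)⁻¹ := by
          rw [show (-2:ℝ) = -((2:ℕ):ℝ) by norm_num, Real.rpow_neg hl0.le, Real.rpow_natCast]
        rw [hexp2] at hexp
        have hxl : x = l * (2 * x₀) := by
          rw [hldef]; field_simp
        have hl2 : (0:ℝ) < l ^ 2 := by positivity
        have hLl : 1 ≤ l ^ 2 * l ^ (α - 2) := by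
          have hmm := mul_le_mul_of_nonneg_left hexp (le_of_lt hl2)
          rwa [mul_inv_cancel₀ (ne_of_gt hl2)] at hmm
        have hP := hφ''nn (2 * x₀) h2x₀
        have hφx := hφ''nn x hx0
        have hLpos : (0:ℝ) < l ^ (α - 2) := Real.rpow_pos_of_pos hl0 _
        -- x² φ''(x) ≥ x² c l^(α-2) φ''(2x₀) = c (l² l^(α-2)) (2x₀)² φ''(2x₀) ≥ c (2x₀)² φ''(2x₀) ≥ m
        have h1 : x ^ 2 * φ'' x ≥ x ^ 2 * (c * l ^ (α - 2) * φ'' (2 * x₀)) := by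
          apply mul_le_mul_of_nonneg_left hs (sq_nonneg x)
        have h2' : x ^ 2 = l ^ 2 * (2 * x₀) ^ 2 := by rw [hxl]; ring
        rw [hmdef]
        nlinarith [mul_le_mul_of_nonneg_right hLl
          (mul_nonneg (mul_nonneg hc0.le (sq_nonneg (2 * x₀))) hP)]
    refine ⟨A + K / m, by positivity, fun x hx => ?_⟩
    have h1 := hmain x hx
    have h2 := hΦm x hx
    have h3 : K ≤ K / m * (x ^ 2 * φ'' x) := by
      rw [div_mul_eq_mul_div, le_div_iff₀ hm]
      nlinarith
    nlinarith

end
end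

section
/- (Proposition 8) Suppose φ'' ∈ WLSC(α−2, c, x₀) for some c ∈ (0,1], x₀ ≥ 0 and α > 0. Then (i) ψ*(x) ≈ Φ*(x) for all x > x₀ (two-sided comparability with constants independent of x); (ii) ψ^{−1}(r) ≈ Φ^{−1}(r) for all r > Φ(x₀); and (iii) there is C ≥ 1 such that Φ^{−1}(λ r) ≤ C λ^{1/α} Φ^{−1}(r) for all λ ≥ 1 and r > Φ(x₀). -/
open MeasureTheory Real Set Filter

noncomputable section

lemma aux_sq_exp_le (t : ℝ) (ht : 0 ≤ t) : t ^ 2 * Real.exp (-t) ≤ 4 := by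
  have h1 : t / 2 ≤ Real.exp (t / 2) := by
    have := Real.add_one_le_exp (t / 2); linarith
  have h2 : (t / 2) ^ 2 ≤ Real.exp (t / 2) ^ 2 := by
    apply pow_le_pow_left₀ (by positivity) h1
  rw [← Real.exp_nat_mul] at h2
  have h3 : t ^ 2 / 4 ≤ Real.exp t := by
    have : ((2:ℕ) : ℝ) * (t / 2) = t := by push_cast; ring
    rw [this] at h2; nlinarith
  rw [Real.exp_neg]
  rw [mul_inv_le_iff₀' (Real.exp_pos t)]
  nlinarith [Real.exp_pos t]

lemma aux_one_sub_cos_le (t : ℝ) : 1 - Real.cos t ≤ 2 * min 1 (t ^ 2) := by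
  rcases le_total 1 (t ^ 2) with h | h
  · rw [min_eq_left h]
    nlinarith [Real.neg_one_le_cos t]
  · rw [min_eq_right h]
    have h1 : Real.sin (t / 2) ^ 2 = 1 / 2 - Real.cos t / 2 := by
      have := Real.sin_sq_eq_half_sub (t / 2)
      rw [show 2 * (t / 2) = t by ring] at this; linarith
    have h2 : Real.sin (t / 2) ^ 2 ≤ (t / 2) ^ 2 := Real.sin_sq_le_sq
    nlinarith

lemma aux_sin_one : Real.sin 1 ≤ 85 / 96 := by
  have h := Real.sin_bound (x := 1) (by norm_num)
  have := abs_le.1 h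
  norm_num at this ⊢
  linarith [this.2]

lemma aux_sinc {t : ℝ} (ht : 0 < t) : (1 / 20) * min 1 (t ^ 2) ≤ 1 - Real.sin t / t := by
  rcases le_total t 1 with h1 | h1
  · -- small t
    have hb := abs_le.1 (Real.sin_bound (x := t) (by rw [abs_of_pos ht]; exact h1))
    have ht4 : |t| ^ 4 ≤ t ^ 3 := by
      rw [abs_of_pos ht]; nlinarith [pow_pos ht 3]
    have hsin : Real.sin t ≤ t - (11 / 96) * t ^ 3 := by nlinarith [hb.2, show |t| ^ 5 ≤ t ^ 3 by rw [abs_of_pos ht]; nlinarith [mul_le_mul_of_nonneg_left (show t ^ 2 ≤ 1 by nlinarith) (pow_pos ht 3).le]]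
    have hmin : min 1 (t ^ 2) = t ^ 2 := min_eq_right (by nlinarith)
    rw [hmin]
    have : Real.sin t / t ≤ 1 - (11 / 96) * t ^ 2 := by
      rw [div_le_iff₀ ht]; nlinarith
    nlinarith
  · -- t ≥ 1
    have hmin : min 1 (t ^ 2) = 1 := min_eq_left (by nlinarith)
    rw [hmin]
    have key : Real.sin t ≤ (19 / 20) * t := by
      rcases le_total t (20 / 19) with h2 | h2
      · have hlip : Real.sin t - Real.sin 1 ≤ t - 1 := by
          have heq := Real.sin_sub_sin t 1
          have h3 : |Real.sin ((t - 1) / 2)| ≤ |(t - 1) / 2| := Real.abs_sin_le_abs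
          have h4 : |Real.cos ((t + 1) / 2)| ≤ 1 := Real.abs_cos_le_one _
          calc Real.sin t - Real.sin 1 = 2 * Real.sin ((t - 1) / 2) * Real.cos ((t + 1) / 2) := heq
          _ ≤ |2 * Real.sin ((t - 1) / 2) * Real.cos ((t + 1) / 2)| := le_abs_self _
          _ = 2 * |Real.sin ((t - 1) / 2)| * |Real.cos ((t + 1) / 2)| := by
              rw [abs_mul, abs_mul]; norm_num
          _ ≤ 2 * |(t - 1) / 2| * 1 := by
              apply mul_le_mul (by nlinarith [abs_nonneg (Real.sin ((t-1)/2))]) h4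
                (abs_nonneg _) (by positivity)
          _ = t - 1 := by rw [abs_of_nonneg (by linarith)]; ring
        have := aux_sin_one
        nlinarith
      · nlinarith [Real.sin_le_one t]
    have : Real.sin t / t ≤ 19 / 20 := by rw [div_le_iff₀ ht]; nlinarith
    linarith

lemma aux_min_le_min (a b : ℝ) (hab : a ≤ b) (ha : 0 ≤ a) :
    min 1 a ≤ min 1 b := by
  exact min_le_min le_rfl hab

lemma aux_min_mul_bound (C x : ℝ) (hC : 0 ≤ C) : min 1 (C * x ^ 2) ≤ max 1 C * min 1 (x ^ 2) := by
  rcases le_total (x ^ 2) 1 with h | h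
  · rw [min_eq_right h]
    calc min 1 (C * x ^ 2) ≤ C * x ^ 2 := min_le_right _ _
    _ ≤ max 1 C * x ^ 2 := by nlinarith [le_max_right 1 C]
  · rw [min_eq_left h]
    calc min 1 (C * x ^ 2) ≤ 1 := min_le_left _ _
    _ ≤ max 1 C := le_max_left _ _
    _ = max 1 C * 1 := by ring

section Integrability

variable {ν : Measure ℝ} [SigmaFinite ν]

lemma int_min_one_sq (hint : ∫⁻ x in Ioi (0:ℝ), ENNReal.ofReal (min 1 (x ^ 2)) ∂ν ≠ ⊤) :
    IntegrableOn (fun x => min 1 (x ^ 2)) (Ioi (0:ℝ)) ν := by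
  constructor
  · exact (continuous_const.min (continuous_pow 2)).aestronglyMeasurable
  · rw [hasFiniteIntegral_iff_ofReal]
    · exact lt_top_iff_ne_top.2 hint
    · filter_upwards with x
      positivity

lemma int_of_le_min (hint : ∫⁻ x in Ioi (0:ℝ), ENNReal.ofReal (min 1 (x ^ 2)) ∂ν ≠ ⊤)
    {s : Set ℝ} (hs : MeasurableSet s) (hsub : s ⊆ Ioi 0) {f : ℝ → ℝ}
    (hm : AEStronglyMeasurable f (ν.restrict s)) (C : ℝ)
    (hf : ∀ x ∈ s, |f x| ≤ C * min 1 (x ^ 2)) : IntegrableOn f s ν := by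
  apply Integrable.mono' (((int_min_one_sq hint).mono_set hsub).const_mul C) hm
  rw [ae_restrict_iff' hs]
  filter_upwards with x hx
  exact hf x hx

lemma int_min_one_mul (hint : ∫⁻ x in Ioi (0:ℝ), ENNReal.ofReal (min 1 (x ^ 2)) ∂ν ≠ ⊤)
    (r : ℝ) : IntegrableOn (fun x => min 1 (r ^ 2 * x ^ 2)) (Ioi (0:ℝ)) ν := by
  apply int_of_le_min hint measurableSet_Ioi le_rfl
    (continuous_const.min (continuous_const.mul (continuous_pow 2))).aestronglyMeasurable
    (max 1 (r ^ 2))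
  intro x _
  show |min 1 (r ^ 2 * x ^ 2)| ≤ max 1 (r ^ 2) * min 1 (x ^ 2)
  rw [abs_of_nonneg (le_min zero_le_one (by positivity))]
  exact aux_min_mul_bound _ _ (by positivity)

lemma int_one_sub_cos (hint : ∫⁻ x in Ioi (0:ℝ), ENNReal.ofReal (min 1 (x ^ 2)) ∂ν ≠ ⊤)
    (ξ : ℝ) : IntegrableOn (fun x => 1 - Real.cos (ξ * x)) (Ioi (0:ℝ)) ν := by
  refine int_of_le_min hint measurableSet_Ioi le_rfl ?_ (2 * max 1 (ξ ^ 2)) ?_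
  · exact Continuous.aestronglyMeasurable (by fun_prop)
  intro x _
  rw [abs_of_nonneg (by nlinarith [Real.cos_le_one (ξ * x)])]
  calc 1 - Real.cos (ξ * x) ≤ 2 * min 1 ((ξ * x) ^ 2) := aux_one_sub_cos_le _
  _ = 2 * min 1 (ξ ^ 2 * x ^ 2) := by ring_nf
  _ ≤ 2 * (max 1 (ξ ^ 2) * min 1 (x ^ 2)) := by
      have := aux_min_mul_bound (ξ ^ 2) x (by positivity); linarith
  _ = 2 * max 1 (ξ ^ 2) * min 1 (x ^ 2) := by ring

lemma int_sq_exp (hint : ∫⁻ x in Ioi (0:ℝ), ENNReal.ofReal (min 1 (x ^ 2)) ∂ν ≠ ⊤)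
    {l : ℝ} (hl : 0 < l) : IntegrableOn (fun x => x ^ 2 * Real.exp (-(l * x))) (Ioi (0:ℝ)) ν := by
  refine int_of_le_min hint measurableSet_Ioi le_rfl ?_ (max 1 (4 / l ^ 2)) ?_
  · exact Continuous.aestronglyMeasurable (by fun_prop)
  intro x hx
  have hx0 : (0:ℝ) < x := hx
  rw [abs_of_nonneg (by positivity)]
  rcases le_total x 1 with h | h
  · rw [min_eq_right (by nlinarith)]
    have h1 : Real.exp (-(l * x)) ≤ 1 := by rw [Real.exp_le_one_iff]; nlinarith
    have h2 : (1:ℝ) ≤ max 1 (4 / l ^ 2) := le_max_left _ _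
    nlinarith [sq_nonneg x, Real.exp_pos (-(l * x))]
  · rw [min_eq_left (by nlinarith)]
    have key : (l * x) ^ 2 * Real.exp (-(l * x)) ≤ 4 := aux_sq_exp_le _ (by positivity)
    have : x ^ 2 * Real.exp (-(l * x)) ≤ 4 / l ^ 2 := by
      rw [le_div_iff₀ (by positivity)]
      calc x ^ 2 * Real.exp (-(l * x)) * l ^ 2 = (l * x) ^ 2 * Real.exp (-(l * x)) := by ring
      _ ≤ 4 := key
    calc x ^ 2 * Real.exp (-(l * x)) ≤ 4 / l ^ 2 := this
    _ ≤ max 1 (4 / l ^ 2) := le_max_right _ _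
    _ = max 1 (4 / l ^ 2) * 1 := by ring

lemma measure_Ioi_lt_top (hint : ∫⁻ x in Ioi (0:ℝ), ENNReal.ofReal (min 1 (x ^ 2)) ∂ν ≠ ⊤)
    {a : ℝ} (ha : 0 < a) : ν (Ioi a) < ⊤ := by
  by_contra h
  push_neg at h
  have htop : ν (Ioi a) = ⊤ := top_le_iff.1 h
  have hle : ENNReal.ofReal (min 1 (a ^ 2)) * ν (Ioi a)
      ≤ ∫⁻ x in Ioi (0:ℝ), ENNReal.ofReal (min 1 (x ^ 2)) ∂ν := by
    calc ENNReal.ofReal (min 1 (a ^ 2)) * ν (Ioi a)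
        = ∫⁻ _ in Ioi a, ENNReal.ofReal (min 1 (a ^ 2)) ∂ν := by rw [setLIntegral_const]
    _ ≤ ∫⁻ x in Ioi a, ENNReal.ofReal (min 1 (x ^ 2)) ∂ν := by
        apply setLIntegral_mono' measurableSet_Ioi
        intro x hx
        apply ENNReal.ofReal_le_ofReal
        apply min_le_min le_rfl
        have : a < x := hx
        nlinarith
    _ ≤ ∫⁻ x in Ioi (0:ℝ), ENNReal.ofReal (min 1 (x ^ 2)) ∂ν := by
        apply lintegral_mono_set
        exact Ioi_subset_Ioi ha.le
  rw [htop, ENNReal.mul_top] at hle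
  · exact hint (top_le_iff.1 hle)
  · simp only [ne_eq, ENNReal.ofReal_eq_zero, not_le]
    have : (0:ℝ) < min 1 (a ^ 2) := lt_min one_pos (by positivity)
    linarith

lemma int_sq_Ioc (hint : ∫⁻ x in Ioi (0:ℝ), ENNReal.ofReal (min 1 (x ^ 2)) ∂ν ≠ ⊤)
    {b : ℝ} (hb : 0 < b) : IntegrableOn (fun s => s ^ 2) (Ioc (0:ℝ) b) ν := by
  apply int_of_le_min hint measurableSet_Ioc Ioc_subset_Ioi_self
    (continuous_pow 2).aestronglyMeasurable (max 1 (b ^ 2))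
  intro x hx
  rw [abs_of_nonneg (by positivity)]
  rcases le_total x 1 with h | h
  · rw [min_eq_right (by nlinarith [hx.1])]
    nlinarith [le_max_left 1 (b ^ 2), hx.1]
  · rw [min_eq_left (by nlinarith)]
    have : x ^ 2 ≤ b ^ 2 := by nlinarith [hx.1, hx.2]
    calc x ^ 2 ≤ b ^ 2 := this
    _ ≤ max 1 (b ^ 2) := le_max_right _ _
    _ = max 1 (b ^ 2) * 1 := by ring

end Integrability

/-- `auxM ν r = ∫ min(1, r²x²) ν(dx)`. -/
def auxM (ν : Measure ℝ) (r : ℝ) : ℝ := ∫ x in Ioi (0:ℝ), min 1 (r ^ 2 * x ^ 2) ∂ν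

/-- `auxG σ ν r = σ²r² + auxM ν r`, comparable to `h(1/r)`. -/
def auxG (σ : ℝ) (ν : Measure ℝ) (r : ℝ) : ℝ := σ ^ 2 * r ^ 2 + auxM ν r

section Gfacts

variable {ν : Measure ℝ} [SigmaFinite ν] {σ : ℝ}

lemma auxM_nonneg (ν : Measure ℝ) (r : ℝ) : 0 ≤ auxM ν r :=
  setIntegral_nonneg measurableSet_Ioi (fun x _ => le_min zero_le_one (by positivity))

lemma auxG_nonneg (σ : ℝ) (ν : Measure ℝ) (r : ℝ) : 0 ≤ auxG σ ν r :=
  add_nonneg (by positivity) (auxM_nonneg ν r)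

lemma auxM_mono (hint : ∫⁻ x in Ioi (0:ℝ), ENNReal.ofReal (min 1 (x ^ 2)) ∂ν ≠ ⊤)
    {a b : ℝ} (ha : 0 ≤ a) (hab : a ≤ b) : auxM ν a ≤ auxM ν b := by
  apply integral_mono (int_min_one_mul hint a) (int_min_one_mul hint b)
  intro x
  have hab2 : a ^ 2 ≤ b ^ 2 := by nlinarith
  exact min_le_min le_rfl (mul_le_mul_of_nonneg_right hab2 (sq_nonneg x))

lemma auxG_mono (hint : ∫⁻ x in Ioi (0:ℝ), ENNReal.ofReal (min 1 (x ^ 2)) ∂ν ≠ ⊤)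
    {a b : ℝ} (ha : 0 ≤ a) (hab : a ≤ b) : auxG σ ν a ≤ auxG σ ν b := by
  unfold auxG
  have h1 := auxM_mono hint ha hab
  have hab2 : a ^ 2 ≤ b ^ 2 := by nlinarith
  nlinarith [mul_le_mul_of_nonneg_left hab2 (sq_nonneg σ)]

lemma auxM_lintegral (hint : ∫⁻ x in Ioi (0:ℝ), ENNReal.ofReal (min 1 (x ^ 2)) ∂ν ≠ ⊤)
    (r : ℝ) : ∫⁻ x in Ioi (0:ℝ), ENNReal.ofReal (min 1 (r ^ 2 * x ^ 2)) ∂ν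
      = ENNReal.ofReal (auxM ν r) := by
  unfold auxM
  refine (ofReal_integral_eq_lintegral_ofReal (int_min_one_mul hint r) ?_).symm
  filter_upwards with x
  simp only [Pi.zero_apply]
  exact le_min zero_le_one (by positivity)

end Gfacts

section PsiFacts

variable {ν : Measure ℝ} [SigmaFinite ν] {σ : ℝ}

lemma rePsi_nonneg (σ : ℝ) (ν : Measure ℝ) (ξ : ℝ) : 0 ≤ rePsi σ ν ξ := by
  unfold rePsi
  have : 0 ≤ ∫ x in Ioi (0:ℝ), (1 - Real.cos (ξ * x)) ∂ν :=
    setIntegral_nonneg measurableSet_Ioi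
      (fun x _ => by nlinarith [Real.cos_le_one (ξ * x)])
  nlinarith [sq_nonneg σ, sq_nonneg ξ]

lemma rePsi_even (σ : ℝ) (ν : Measure ℝ) (ξ : ℝ) : rePsi σ ν (-ξ) = rePsi σ ν ξ := by
  unfold rePsi
  congr 1
  · ring
  · apply integral_congr_ae
    filter_upwards with x
    rw [show -ξ * x = -(ξ * x) by ring, Real.cos_neg]

lemma rePsi_zero (σ : ℝ) (ν : Measure ℝ) : rePsi σ ν 0 = 0 := by
  unfold rePsi
  have : ∀ x : ℝ, (1 : ℝ) - Real.cos (0 * x) = 0 := by intro x; simp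
  simp only [this]
  simp

lemma rePsi_ge_sq (hint : ∫⁻ x in Ioi (0:ℝ), ENNReal.ofReal (min 1 (x ^ 2)) ∂ν ≠ ⊤)
    (σ : ℝ) (ξ : ℝ) : σ ^ 2 * ξ ^ 2 ≤ rePsi σ ν ξ := by
  unfold rePsi
  have : 0 ≤ ∫ x in Ioi (0:ℝ), (1 - Real.cos (ξ * x)) ∂ν :=
    setIntegral_nonneg measurableSet_Ioi
      (fun x _ => by nlinarith [Real.cos_le_one (ξ * x)])
  linarith

lemma rePsi_int_le (hint : ∫⁻ x in Ioi (0:ℝ), ENNReal.ofReal (min 1 (x ^ 2)) ∂ν ≠ ⊤)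
    {r ξ : ℝ} (hξ : |ξ| ≤ r) :
    ∫ x in Ioi (0:ℝ), (1 - Real.cos (ξ * x)) ∂ν ≤ 2 * auxM ν r := by
  have hsq : ξ ^ 2 ≤ r ^ 2 := by
    have := abs_nonneg ξ
    nlinarith [sq_abs ξ]
  calc ∫ x in Ioi (0:ℝ), (1 - Real.cos (ξ * x)) ∂ν
      ≤ ∫ x in Ioi (0:ℝ), 2 * min 1 (r ^ 2 * x ^ 2) ∂ν := by
        apply integral_mono (int_one_sub_cos hint ξ) ((int_min_one_mul hint r).const_mul 2)
        intro x
        calc 1 - Real.cos (ξ * x) ≤ 2 * min 1 ((ξ * x) ^ 2) := aux_one_sub_cos_le _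
        _ = 2 * min 1 (ξ ^ 2 * x ^ 2) := by ring_nf
        _ ≤ 2 * min 1 (r ^ 2 * x ^ 2) := by
            have : min 1 (ξ ^ 2 * x ^ 2) ≤ min 1 (r ^ 2 * x ^ 2) :=
              min_le_min le_rfl (by nlinarith [sq_nonneg x])
            linarith
  _ = 2 * auxM ν r := by rw [integral_const_mul]; rfl

lemma rePsi_le_two_g (hint : ∫⁻ x in Ioi (0:ℝ), ENNReal.ofReal (min 1 (x ^ 2)) ∂ν ≠ ⊤)
    {r ξ : ℝ} (hξ : |ξ| ≤ r) : rePsi σ ν ξ ≤ 2 * auxG σ ν r := by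
  have h1 := rePsi_int_le hint hξ
  have hsq : ξ ^ 2 ≤ r ^ 2 := by
    have := abs_nonneg ξ
    nlinarith [sq_abs ξ]
  unfold rePsi auxG
  nlinarith [sq_nonneg σ, auxM_nonneg ν r]

lemma bddAbove_psiSet (hint : ∫⁻ x in Ioi (0:ℝ), ENNReal.ofReal (min 1 (x ^ 2)) ∂ν ≠ ⊤)
    (σ : ℝ) (r : ℝ) : BddAbove (rePsi σ ν '' {z : ℝ | |z| ≤ r}) := by
  refine ⟨2 * auxG σ ν r, ?_⟩
  rintro y ⟨z, hz, rfl⟩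
  exact rePsi_le_two_g hint hz

lemma le_psiStar (hint : ∫⁻ x in Ioi (0:ℝ), ENNReal.ofReal (min 1 (x ^ 2)) ∂ν ≠ ⊤)
    (σ : ℝ) {r ξ : ℝ} (hξ : |ξ| ≤ r) : rePsi σ ν ξ ≤ psiStar σ ν r :=
  le_csSup (bddAbove_psiSet hint σ r) ⟨ξ, hξ, rfl⟩

lemma psiStar_nonneg (hint : ∫⁻ x in Ioi (0:ℝ), ENNReal.ofReal (min 1 (x ^ 2)) ∂ν ≠ ⊤)
    (σ : ℝ) {r : ℝ} (hr : 0 ≤ r) : 0 ≤ psiStar σ ν r := by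
  have := le_psiStar (σ := σ) hint (r := r) (ξ := r) (by rw [abs_of_nonneg hr])
  have := rePsi_nonneg σ ν r
  linarith

lemma psiStar_le_two_g (hint : ∫⁻ x in Ioi (0:ℝ), ENNReal.ofReal (min 1 (x ^ 2)) ∂ν ≠ ⊤)
    (σ : ℝ) {r : ℝ} (hr : 0 < r) : psiStar σ ν r ≤ 2 * auxG σ ν r := by
  apply Real.sSup_le
  · rintro y ⟨z, hz, rfl⟩
    exact rePsi_le_two_g hint hz
  · have := auxG_nonneg σ ν r; linarith

lemma psiStar_eq_runSup (hint : ∫⁻ x in Ioi (0:ℝ), ENNReal.ofReal (min 1 (x ^ 2)) ∂ν ≠ ⊤)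
    (σ : ℝ) {r : ℝ} (hr : 0 < r) :
    psiStar σ ν r = sSup (rePsi σ ν '' Ioc 0 r) := by
  have himg : rePsi σ ν '' {z : ℝ | |z| ≤ r} = rePsi σ ν '' Icc 0 r := by
    ext y
    constructor
    · rintro ⟨z, hz, rfl⟩
      refine ⟨|z|, ⟨abs_nonneg z, hz⟩, ?_⟩
      rcases le_or_gt 0 z with h | h
      · rw [abs_of_nonneg h]
      · rw [abs_of_neg h]; exact rePsi_even σ ν z
    · rintro ⟨z, hz, rfl⟩
      exact ⟨z, by rw [mem_setOf_eq, abs_of_nonneg hz.1]; exact hz.2, rfl⟩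
  have hicc : Icc (0:ℝ) r = insert 0 (Ioc 0 r) := (Set.Ioc_insert_left hr.le).symm
  have hbdd : BddAbove (rePsi σ ν '' Ioc 0 r) := by
    refine ⟨2 * auxG σ ν r, ?_⟩
    rintro y ⟨z, hz, rfl⟩
    exact rePsi_le_two_g hint (by rw [abs_of_pos hz.1]; exact hz.2)
  have hne : (rePsi σ ν '' Ioc 0 r).Nonempty := ⟨rePsi σ ν r, ⟨r, ⟨hr, le_rfl⟩, rfl⟩⟩
  unfold psiStar
  rw [himg, hicc, Set.image_insert_eq, csSup_insert hbdd hne, rePsi_zero]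
  rw [sup_eq_right.2]
  calc (0:ℝ) ≤ rePsi σ ν r := rePsi_nonneg σ ν r
  _ ≤ sSup (rePsi σ ν '' Ioc 0 r) := le_csSup hbdd ⟨r, ⟨hr, le_rfl⟩, rfl⟩

end PsiFacts



section PhiFacts

variable {ν : Measure ℝ} [SigmaFinite ν] {σ : ℝ} {φ'' : ℝ → ℝ}

lemma nu_Ioo_top (h : ∫⁻ x in Ioo (0:ℝ) 1, ENNReal.ofReal x ∂ν = ⊤) :
    ν (Ioo (0:ℝ) 1) = ⊤ := by
  have hle : ∫⁻ x in Ioo (0:ℝ) 1, ENNReal.ofReal x ∂ν ≤ ∫⁻ _ in Ioo (0:ℝ) 1, 1 ∂ν := by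
    apply setLIntegral_mono' measurableSet_Ioo
    intro x hx
    calc ENNReal.ofReal x ≤ ENNReal.ofReal 1 := ENNReal.ofReal_le_ofReal hx.2.le
    _ = 1 := ENNReal.ofReal_one
  rw [setLIntegral_const, one_mul] at hle
  rw [h] at hle
  exact top_le_iff.1 hle

lemma int_exp_nonneg (ν : Measure ℝ) (l : ℝ) :
    0 ≤ ∫ x in Ioi (0:ℝ), x ^ 2 * Real.exp (-(l * x)) ∂ν :=
  setIntegral_nonneg measurableSet_Ioi (fun x _ => by positivity)

lemma phi2_pos (hint : ∫⁻ x in Ioi (0:ℝ), ENNReal.ofReal (min 1 (x ^ 2)) ∂ν ≠ ⊤)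
    (hφ'' : ∀ l : ℝ, 0 < l → φ'' l = 2 * σ ^ 2 +
      ∫ x in Ioi (0:ℝ), x ^ 2 * Real.exp (-(l * x)) ∂ν)
    (hUV : 0 < σ ∨ ∫⁻ x in Ioo (0:ℝ) 1, ENNReal.ofReal x ∂ν = ⊤)
    {l : ℝ} (hl : 0 < l) : 0 < φ'' l := by
  rw [hφ'' l hl]
  rcases hUV with hσ | hν
  · have := int_exp_nonneg ν l
    nlinarith
  · have hpos : 0 < ∫ x in Ioi (0:ℝ), x ^ 2 * Real.exp (-(l * x)) ∂ν := by
      rw [setIntegral_pos_iff_support_of_nonneg_ae]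
      · have hsub : Ioo (0:ℝ) 1 ⊆ Function.support (fun x => x ^ 2 * Real.exp (-(l * x))) ∩ Ioi 0 := by
          intro x hx
          constructor
          · simp only [Function.mem_support]
            have h1 : (0:ℝ) < x := hx.1
            positivity
          · exact hx.1
        calc (0:ENNReal) < ⊤ := by simp
        _ = ν (Ioo (0:ℝ) 1) := (nu_Ioo_top hν).symm
        _ ≤ ν (Function.support (fun x => x ^ 2 * Real.exp (-(l * x))) ∩ Ioi 0) := measure_mono hsub
      · filter_upwards with x
        simp only [Pi.zero_apply]
        positivity
      · exact int_sq_exp hint hl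
    nlinarith [sq_nonneg σ]

lemma bigPhi_pos (hint : ∫⁻ x in Ioi (0:ℝ), ENNReal.ofReal (min 1 (x ^ 2)) ∂ν ≠ ⊤)
    (hφ'' : ∀ l : ℝ, 0 < l → φ'' l = 2 * σ ^ 2 +
      ∫ x in Ioi (0:ℝ), x ^ 2 * Real.exp (-(l * x)) ∂ν)
    (hUV : 0 < σ ∨ ∫⁻ x in Ioo (0:ℝ) 1, ENNReal.ofReal x ∂ν = ⊤)
    {x : ℝ} (hx : 0 < x) : 0 < bigPhi φ'' x := by
  have := phi2_pos hint hφ'' hUV hx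
  unfold bigPhi
  positivity

lemma bigPhi_eq (hφ'' : ∀ l : ℝ, 0 < l → φ'' l = 2 * σ ^ 2 +
      ∫ x in Ioi (0:ℝ), x ^ 2 * Real.exp (-(l * x)) ∂ν)
    {x : ℝ} (hx : 0 < x) : bigPhi φ'' x = 2 * σ ^ 2 * x ^ 2 +
      ∫ s in Ioi (0:ℝ), x ^ 2 * (s ^ 2 * Real.exp (-(x * s))) ∂ν := by
  unfold bigPhi
  rw [hφ'' x hx, integral_const_mul]
  ring

lemma bigPhi_le_four_g (hint : ∫⁻ x in Ioi (0:ℝ), ENNReal.ofReal (min 1 (x ^ 2)) ∂ν ≠ ⊤)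
    (hφ'' : ∀ l : ℝ, 0 < l → φ'' l = 2 * σ ^ 2 +
      ∫ x in Ioi (0:ℝ), x ^ 2 * Real.exp (-(l * x)) ∂ν)
    {x : ℝ} (hx : 0 < x) : bigPhi φ'' x ≤ 4 * auxG σ ν x := by
  rw [bigPhi_eq hφ'' hx]
  have key : ∫ s in Ioi (0:ℝ), x ^ 2 * (s ^ 2 * Real.exp (-(x * s))) ∂ν
      ≤ ∫ s in Ioi (0:ℝ), 4 * min 1 (x ^ 2 * s ^ 2) ∂ν := by
    apply setIntegral_mono_on ((int_sq_exp hint hx).const_mul (x ^ 2))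
      ((int_min_one_mul hint x).const_mul 4) measurableSet_Ioi
    intro s hs
    have hs0 : (0:ℝ) < s := hs
    have ht : 0 < x * s := by positivity
    rcases le_total (x * s) 1 with h | h
    · have hmin : min 1 (x ^ 2 * s ^ 2) = x ^ 2 * s ^ 2 := min_eq_right (by nlinarith)
      rw [hmin]
      have he : Real.exp (-(x * s)) ≤ 1 := by rw [Real.exp_le_one_iff]; linarith
      have h2 : s ^ 2 * Real.exp (-(x * s)) ≤ s ^ 2 * 1 :=
        mul_le_mul_of_nonneg_left he (sq_nonneg s)
      have h3 : x ^ 2 * (s ^ 2 * Real.exp (-(x * s))) ≤ x ^ 2 * (s ^ 2 * 1) :=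
        mul_le_mul_of_nonneg_left h2 (sq_nonneg x)
      nlinarith [mul_nonneg (sq_nonneg x) (sq_nonneg s)]
    · have hmin : min 1 (x ^ 2 * s ^ 2) = 1 := min_eq_left (by nlinarith)
      rw [hmin]
      have := aux_sq_exp_le (x * s) ht.le
      calc x ^ 2 * (s ^ 2 * Real.exp (-(x * s))) = (x * s) ^ 2 * Real.exp (-(x * s)) := by ring
      _ ≤ 4 := this
      _ = 4 * 1 := by ring
  rw [integral_const_mul, integral_const_mul] at key
  rw [integral_const_mul]
  unfold auxG auxM
  have := auxM_nonneg ν x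
  unfold auxM at this
  nlinarith [sq_nonneg (σ * x)]

lemma Phi_lower (hint : ∫⁻ x in Ioi (0:ℝ), ENNReal.ofReal (min 1 (x ^ 2)) ∂ν ≠ ⊤)
    (hφ'' : ∀ l : ℝ, 0 < l → φ'' l = 2 * σ ^ 2 +
      ∫ x in Ioi (0:ℝ), x ^ 2 * Real.exp (-(l * x)) ∂ν)
    {x : ℝ} (hx : 0 < x) :
    σ ^ 2 * x ^ 2 + ∫ s in Ioc (0:ℝ) x⁻¹, x ^ 2 * s ^ 2 ∂ν ≤ 4 * bigPhi φ'' x := by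
  set A := ∫ s in Ioc (0:ℝ) x⁻¹, x ^ 2 * s ^ 2 ∂ν with hA
  have hAnn : 0 ≤ A := setIntegral_nonneg measurableSet_Ioc (fun s _ => by positivity)
  have hinv : (0:ℝ) < x⁻¹ := by positivity
  have step1 : Real.exp (-1) * A ≤ ∫ s in Ioc (0:ℝ) x⁻¹, x ^ 2 * (s ^ 2 * Real.exp (-(x * s))) ∂ν := by
    rw [hA, ← integral_const_mul]
    apply setIntegral_mono_on
      (((int_sq_Ioc hint hinv).const_mul (x ^ 2)).const_mul (Real.exp (-1)))
      (((int_sq_exp hint hx).mono_set Ioc_subset_Ioi_self).const_mul (x ^ 2))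
      measurableSet_Ioc
    intro s hs
    have hs0 : (0:ℝ) < s := hs.1
    have hxs : x * s ≤ 1 := by
      calc x * s ≤ x * x⁻¹ := by apply mul_le_mul_of_nonneg_left hs.2 hx.le
      _ = 1 := mul_inv_cancel₀ (ne_of_gt hx)
    have he : Real.exp (-1) ≤ Real.exp (-(x * s)) := by
      apply Real.exp_le_exp.2; linarith
    calc Real.exp (-1) * (x ^ 2 * s ^ 2) = (x ^ 2 * s ^ 2) * Real.exp (-1) := by ring
    _ ≤ (x ^ 2 * s ^ 2) * Real.exp (-(x * s)) := by
        apply mul_le_mul_of_nonneg_left he (by positivity)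
    _ = x ^ 2 * (s ^ 2 * Real.exp (-(x * s))) := by ring
  have step2 : ∫ s in Ioc (0:ℝ) x⁻¹, x ^ 2 * (s ^ 2 * Real.exp (-(x * s))) ∂ν
      ≤ ∫ s in Ioi (0:ℝ), x ^ 2 * (s ^ 2 * Real.exp (-(x * s))) ∂ν := by
    apply setIntegral_mono_set ((int_sq_exp hint hx).const_mul (x ^ 2))
    · filter_upwards with s
      simp only [Pi.zero_apply]
      positivity
    · exact HasSubset.Subset.eventuallyLE Ioc_subset_Ioi_self
  have hP : 2 * σ ^ 2 * x ^ 2 + Real.exp (-1) * A ≤ bigPhi φ'' x := by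
    rw [bigPhi_eq hφ'' hx]
    have := step1.trans step2
    linarith
  have hE : Real.exp (-1) * Real.exp 1 = 1 := by
    rw [← Real.exp_add]; norm_num
  have he1 : Real.exp 1 < 2.7182818286 := Real.exp_one_lt_d9
  have he0 : 0 < Real.exp 1 := Real.exp_pos 1
  have hA' : A ≤ Real.exp 1 * (bigPhi φ'' x - 2 * σ ^ 2 * x ^ 2) := by
    have h2 : Real.exp (-1) * A ≤ bigPhi φ'' x - 2 * σ ^ 2 * x ^ 2 := by linarith
    calc A = Real.exp 1 * (Real.exp (-1) * A) := by rw [← mul_assoc, mul_comm (Real.exp 1), hE, one_mul]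
    _ ≤ Real.exp 1 * (bigPhi φ'' x - 2 * σ ^ 2 * x ^ 2) := by
        apply mul_le_mul_of_nonneg_left h2 he0.le
  have hPnn : 0 ≤ bigPhi φ'' x := by nlinarith [Real.exp_pos (-1), sq_nonneg (σ * x)]
  nlinarith [sq_nonneg (σ * x)]

lemma tail_dyadic (hint : ∫⁻ x in Ioi (0:ℝ), ENNReal.ofReal (min 1 (x ^ 2)) ∂ν ≠ ⊤)
    (hφ'' : ∀ l : ℝ, 0 < l → φ'' l = 2 * σ ^ 2 +
      ∫ x in Ioi (0:ℝ), x ^ 2 * Real.exp (-(l * x)) ∂ν)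
    {y : ℝ} (hy : 0 < y) :
    (ν (Ioc y⁻¹ (2 * y⁻¹))).toReal ≤ Real.exp 2 * bigPhi φ'' y := by
  set S := Ioc y⁻¹ (2 * y⁻¹) with hS
  have hinv : (0:ℝ) < y⁻¹ := by positivity
  have hfin : ν S < ⊤ :=
    lt_of_le_of_lt (measure_mono Ioc_subset_Ioi_self) (measure_Ioi_lt_top hint hinv)
  have hSsub : S ⊆ Ioi (0:ℝ) := fun s hs => lt_trans hinv hs.1
  have step1 : (ν S).toReal * (y⁻¹ ^ 2 * Real.exp (-2)) ≤ ∫ s in S, s ^ 2 * Real.exp (-(y * s)) ∂ν := by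
    have := setIntegral_const (μ := ν) (s := S) (y⁻¹ ^ 2 * Real.exp (-2))
    rw [smul_eq_mul, measureReal_def] at this
    rw [← this]
    apply setIntegral_mono_on (integrableOn_const (hs := hfin.ne))
      ((int_sq_exp hint hy).mono_set hSsub) measurableSet_Ioc
    intro s hs
    have hs1 : y⁻¹ < s := hs.1
    have hs2 : s ≤ 2 * y⁻¹ := hs.2
    have hys : y * s ≤ 2 := by
      calc y * s ≤ y * (2 * y⁻¹) := mul_le_mul_of_nonneg_left hs2 hy.le
      _ = 2 * (y * y⁻¹) := by ring
      _ = 2 := by rw [mul_inv_cancel₀ (ne_of_gt hy)]; ring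
    have he : Real.exp (-2) ≤ Real.exp (-(y * s)) := Real.exp_le_exp.2 (by linarith)
    have hsq : y⁻¹ ^ 2 ≤ s ^ 2 := by nlinarith
    calc y⁻¹ ^ 2 * Real.exp (-2) ≤ s ^ 2 * Real.exp (-2) :=
      mul_le_mul_of_nonneg_right hsq (Real.exp_pos _).le
    _ ≤ s ^ 2 * Real.exp (-(y * s)) := mul_le_mul_of_nonneg_left he (by positivity)
  have step2 : y ^ 2 * ∫ s in S, s ^ 2 * Real.exp (-(y * s)) ∂ν ≤ bigPhi φ'' y := by
    rw [bigPhi_eq hφ'' hy, ← integral_const_mul]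
    have h1 : ∫ s in S, y ^ 2 * (s ^ 2 * Real.exp (-(y * s))) ∂ν
        ≤ ∫ s in Ioi (0:ℝ), y ^ 2 * (s ^ 2 * Real.exp (-(y * s))) ∂ν := by
      apply setIntegral_mono_set ((int_sq_exp hint hy).const_mul (y ^ 2))
      · filter_upwards with s
        simp only [Pi.zero_apply]
        positivity
      · exact HasSubset.Subset.eventuallyLE hSsub
    nlinarith [sq_nonneg (σ * y)]
  have hkey : (ν S).toReal * Real.exp (-2) ≤ bigPhi φ'' y := by
    have h2 : y ^ 2 * ((ν S).toReal * (y⁻¹ ^ 2 * Real.exp (-2)))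
        ≤ y ^ 2 * ∫ s in S, s ^ 2 * Real.exp (-(y * s)) ∂ν :=
      mul_le_mul_of_nonneg_left step1 (by positivity)
    have h3 : y ^ 2 * ((ν S).toReal * (y⁻¹ ^ 2 * Real.exp (-2)))
        = (ν S).toReal * Real.exp (-2) := by
      field_simp
    rw [h3] at h2
    linarith
  have hE : Real.exp (-2) * Real.exp 2 = 1 := by rw [← Real.exp_add]; norm_num
  calc (ν S).toReal = Real.exp 2 * ((ν S).toReal * Real.exp (-2)) := by
        rw [show Real.exp 2 * ((ν S).toReal * Real.exp (-2)) = (ν S).toReal * (Real.exp (-2) * Real.exp 2) by ring, hE, mul_one]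
  _ ≤ Real.exp 2 * bigPhi φ'' y := mul_le_mul_of_nonneg_left hkey (Real.exp_pos 2).le

end PhiFacts

section Averaging

variable {ν : Measure ℝ} [SigmaFinite ν] {σ : ℝ}

lemma auxM_le_psiStar (hint : ∫⁻ x in Ioi (0:ℝ), ENNReal.ofReal (min 1 (x ^ 2)) ∂ν ≠ ⊤)
    (σ : ℝ) {r : ℝ} (hr : 0 < r) : auxM ν r ≤ 20 * psiStar σ ν r := by
  have hψnn : 0 ≤ psiStar σ ν r := psiStar_nonneg hint σ hr.le
  -- pointwise lower bound for the inner (Lebesgue) integral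
  have hx0 : ∀ x ∈ Ioi (0:ℝ), ENNReal.ofReal (r / 20 * min 1 (r ^ 2 * x ^ 2))
      ≤ ∫⁻ u in Ioc (0:ℝ) r, ENNReal.ofReal (1 - Real.cos (u * x)) ∂volume := by
    intro x hx
    have hxp : (0:ℝ) < x := hx
    have hcont : Continuous (fun u : ℝ => 1 - Real.cos (u * x)) := by fun_prop
    have hInt : ∫ u in Ioc (0:ℝ) r, (1 - Real.cos (u * x)) ∂volume
        = r - Real.sin (r * x) / x := by
      rw [← intervalIntegral.integral_of_le hr.le]
      have hc : IntervalIntegrable (fun u => Real.cos (u * x)) volume 0 r :=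
        Continuous.intervalIntegrable (by fun_prop) _ _
      have h2 : ∫ u in (0:ℝ)..r, Real.cos (u * x) = Real.sin (r * x) / x := by
        rw [intervalIntegral.integral_comp_mul_right Real.cos (ne_of_gt hxp)]
        rw [integral_cos]
        rw [zero_mul, Real.sin_zero, sub_zero, smul_eq_mul]
        rw [inv_mul_eq_div]
      rw [intervalIntegral.integral_sub (intervalIntegrable_const) hc, h2]
      simp
    have hIneq : r / 20 * min 1 (r ^ 2 * x ^ 2) ≤ r - Real.sin (r * x) / x := by
      have hs := aux_sinc (t := r * x) (by positivity)
      have hmin : min 1 ((r * x) ^ 2) = min 1 (r ^ 2 * x ^ 2) := by rw [mul_pow]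
      rw [hmin] at hs
      have := mul_le_mul_of_nonneg_left hs hr.le
      have heq : r * (1 - Real.sin (r * x) / (r * x)) = r - Real.sin (r * x) / x := by
        field_simp
      rw [heq] at this
      calc r / 20 * min 1 (r ^ 2 * x ^ 2) = r * (1 / 20 * min 1 (r ^ 2 * x ^ 2)) := by ring
      _ ≤ r - Real.sin (r * x) / x := this
    calc ENNReal.ofReal (r / 20 * min 1 (r ^ 2 * x ^ 2))
        ≤ ENNReal.ofReal (r - Real.sin (r * x) / x) := ENNReal.ofReal_le_ofReal hIneq
    _ = ENNReal.ofReal (∫ u in Ioc (0:ℝ) r, (1 - Real.cos (u * x)) ∂volume) := by rw [hInt]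
    _ = ∫⁻ u in Ioc (0:ℝ) r, ENNReal.ofReal (1 - Real.cos (u * x)) ∂volume := by
        apply ofReal_integral_eq_lintegral_ofReal (hcont.integrableOn_Ioc)
        filter_upwards with u
        simp only [Pi.zero_apply]
        nlinarith [Real.cos_le_one (u * x)]
  have main : ENNReal.ofReal (r / 20) * ENNReal.ofReal (auxM ν r)
      ≤ ENNReal.ofReal (psiStar σ ν r) * ENNReal.ofReal r := by
    calc ENNReal.ofReal (r / 20) * ENNReal.ofReal (auxM ν r)
        = ∫⁻ x in Ioi (0:ℝ), ENNReal.ofReal (r / 20) * ENNReal.ofReal (min 1 (r ^ 2 * x ^ 2)) ∂ν := by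
          rw [lintegral_const_mul _ (by fun_prop), auxM_lintegral hint]
    _ = ∫⁻ x in Ioi (0:ℝ), ENNReal.ofReal (r / 20 * min 1 (r ^ 2 * x ^ 2)) ∂ν := by
          apply lintegral_congr
          intro x
          rw [ENNReal.ofReal_mul (by positivity)]
    _ ≤ ∫⁻ x in Ioi (0:ℝ), (∫⁻ u in Ioc (0:ℝ) r, ENNReal.ofReal (1 - Real.cos (u * x)) ∂volume) ∂ν :=
          setLIntegral_mono' measurableSet_Ioi hx0
    _ = ∫⁻ u in Ioc (0:ℝ) r, (∫⁻ x in Ioi (0:ℝ), ENNReal.ofReal (1 - Real.cos (u * x)) ∂ν) ∂volume := by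
          apply lintegral_lintegral_swap
          apply Measurable.aemeasurable
          have hm : Measurable fun p : ℝ × ℝ => ENNReal.ofReal (1 - Real.cos (p.2 * p.1)) := by
            fun_prop
          exact hm
    _ ≤ ∫⁻ u in Ioc (0:ℝ) r, ENNReal.ofReal (psiStar σ ν r) ∂volume := by
          apply setLIntegral_mono' measurableSet_Ioc
          intro u hu
          have hu0 : 0 < u := hu.1
          have hur : |u| ≤ r := by rw [abs_of_pos hu0]; exact hu.2
          calc ∫⁻ x in Ioi (0:ℝ), ENNReal.ofReal (1 - Real.cos (u * x)) ∂ν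
              = ENNReal.ofReal (∫ x in Ioi (0:ℝ), (1 - Real.cos (u * x)) ∂ν) := by
                refine (ofReal_integral_eq_lintegral_ofReal (int_one_sub_cos hint u) ?_).symm
                filter_upwards with x
                simp only [Pi.zero_apply]
                nlinarith [Real.cos_le_one (u * x)]
          _ ≤ ENNReal.ofReal (psiStar σ ν r) := by
                apply ENNReal.ofReal_le_ofReal
                have h1 : ∫ x in Ioi (0:ℝ), (1 - Real.cos (u * x)) ∂ν ≤ rePsi σ ν u := by
                  unfold rePsi
                  nlinarith [sq_nonneg (σ * u)]
                exact h1.trans (le_psiStar hint σ hur)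
    _ = ENNReal.ofReal (psiStar σ ν r) * ENNReal.ofReal r := by
          rw [setLIntegral_const, Real.volume_Ioc, sub_zero]
  rw [← ENNReal.ofReal_mul (by positivity), ← ENNReal.ofReal_mul hψnn] at main
  rw [ENNReal.ofReal_le_ofReal_iff (by positivity)] at main
  nlinarith

lemma auxG_le_psiStar (hint : ∫⁻ x in Ioi (0:ℝ), ENNReal.ofReal (min 1 (x ^ 2)) ∂ν ≠ ⊤)
    (σ : ℝ) {r : ℝ} (hr : 0 < r) : auxG σ ν r ≤ 21 * psiStar σ ν r := by
  have h1 := auxM_le_psiStar hint σ hr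
  have h2 : σ ^ 2 * r ^ 2 ≤ psiStar σ ν r :=
    (rePsi_ge_sq hint σ r).trans (le_psiStar hint σ (by rw [abs_of_pos hr]))
  unfold auxG
  linarith

end Averaging

/-- Running supremum over `(0, r]`. -/
def runSup (f : ℝ → ℝ) (r : ℝ) : ℝ := sSup (f '' Ioc (0:ℝ) r)

section RunSup

variable {f : ℝ → ℝ}

lemma le_runSup (hb : ∀ r > (0:ℝ), BddAbove (f '' Ioc (0:ℝ) r)) {y r : ℝ}
    (hy : y ∈ Ioc (0:ℝ) r) : f y ≤ runSup f r :=
  le_csSup (hb r (lt_of_lt_of_le hy.1 hy.2)) ⟨y, hy, rfl⟩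

lemma runSup_le {r B : ℝ} (hr : 0 < r) (hB : ∀ y ∈ Ioc (0:ℝ) r, f y ≤ B) :
    runSup f r ≤ B := by
  apply csSup_le ((Set.nonempty_Ioc.2 hr).image f)
  rintro y ⟨z, hz, rfl⟩
  exact hB z hz

lemma runSup_mono (hb : ∀ r > (0:ℝ), BddAbove (f '' Ioc (0:ℝ) r)) {a b : ℝ}
    (ha : 0 < a) (hab : a ≤ b) : runSup f a ≤ runSup f b :=
  csSup_le_csSup (hb b (lt_of_lt_of_le ha hab)) (((Set.nonempty_Ioc.2 ha).image f))
    (Set.image_mono (Ioc_subset_Ioc le_rfl hab))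

lemma runSup_split (hb : ∀ r > (0:ℝ), BddAbove (f '' Ioc (0:ℝ) r)) {a b : ℝ}
    (ha : 0 < a) (hab : a < b) :
    runSup f b = max (runSup f a) (sSup (f '' Ioc a b)) := by
  unfold runSup
  rw [show Ioc (0:ℝ) b = Ioc 0 a ∪ Ioc a b from (Ioc_union_Ioc_eq_Ioc ha.le hab.le).symm]
  rw [Set.image_union]
  rw [csSup_union (hb a ha) ((Set.nonempty_Ioc.2 ha).image f)
    ((hb b (ha.trans hab)).mono (Set.image_mono (Ioc_subset_Ioc ha.le le_rfl)))
    ((Set.nonempty_Ioc.2 hab).image f)]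

lemma runSup_contAt (hf : ContinuousOn f (Ioi (0:ℝ)))
    (hb : ∀ r > (0:ℝ), BddAbove (f '' Ioc (0:ℝ) r)) {x : ℝ} (hx : 0 < x) :
    ContinuousAt (runSup f) x := by
  rw [Metric.continuousAt_iff]
  intro ε hε
  have hfc : ContinuousAt f x := hf.continuousAt (Ioi_mem_nhds hx)
  rw [Metric.continuousAt_iff] at hfc
  obtain ⟨δ₀, hδ₀, hfd⟩ := hfc (ε / 4) (by linarith)
  refine ⟨min δ₀ (x / 2), lt_min hδ₀ (by linarith), ?_⟩
  intro y hy
  rw [Real.dist_eq] at hy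
  have hyδ : |y - x| < δ₀ := lt_of_lt_of_le hy (min_le_left _ _)
  have hyx : |y - x| < x / 2 := lt_of_lt_of_le hy (min_le_right _ _)
  have hy0 : 0 < y := by
    have := abs_lt.1 hyx
    linarith [this.1]
  have hfyx : |f y - f x| < ε / 4 := by
    apply hfd
    rw [Real.dist_eq]
    exact hyδ
  have key : |runSup f y - runSup f x| ≤ ε / 2 := by
    rw [abs_sub_le_iff]
    rcases lt_trichotomy y x with hlt | heq | hgt
    · have hsplit := runSup_split hb hy0 hlt
      constructor
      · have := runSup_mono hb hy0 hlt.le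
        linarith
      · have hsup : sSup (f '' Ioc y x) ≤ runSup f y + ε / 2 := by
          apply csSup_le ((Set.nonempty_Ioc.2 hlt).image f)
          rintro z ⟨t, ht, rfl⟩
          have htx : |t - x| < δ₀ := by
            rw [abs_sub_comm] at hyδ
            have h1 : y < t := ht.1
            have h2 : t ≤ x := ht.2
            rw [abs_of_nonpos (by linarith)]
            have := abs_lt.1 hyδ
            linarith
          have hft : |f t - f x| < ε / 4 := by
            apply hfd; rw [Real.dist_eq]; exact htx
          have hfy : f y ≤ runSup f y := le_runSup hb ⟨hy0, le_rfl⟩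
          have := abs_lt.1 hft
          have := abs_lt.1 hfyx
          linarith
        have hXY : runSup f x ≤ runSup f y + ε / 2 := by
          rw [hsplit]
          apply max_le (by linarith) hsup
        linarith
    · rw [heq]; constructor <;> linarith
    · have hsplit := runSup_split hb hx hgt
      constructor
      · have hsup : sSup (f '' Ioc x y) ≤ runSup f x + ε / 2 := by
          apply csSup_le ((Set.nonempty_Ioc.2 hgt).image f)
          rintro z ⟨t, ht, rfl⟩
          have htx : |t - x| < δ₀ := by
            have h1 : x < t := ht.1
            have h2 : t ≤ y := ht.2
            rw [abs_of_nonneg (by linarith)]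
            have := abs_lt.1 hyδ
            linarith
          have hft : |f t - f x| < ε / 4 := by
            apply hfd; rw [Real.dist_eq]; exact htx
          have hfx : f x ≤ runSup f x := le_runSup hb ⟨hx, le_rfl⟩
          have := abs_lt.1 hft
          linarith
        have hXY : runSup f y ≤ runSup f x + ε / 2 := by
          rw [hsplit]
          apply max_le (by linarith) hsup
        linarith
      · have := runSup_mono hb hx hgt.le
        linarith
  calc dist (runSup f y) (runSup f x) = |runSup f y - runSup f x| := Real.dist_eq _ _
  _ ≤ ε / 2 := key
  _ < ε := by linarith

lemma runSup_contOn (hf : ContinuousOn f (Ioi (0:ℝ)))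
    (hb : ∀ r > (0:ℝ), BddAbove (f '' Ioc (0:ℝ) r)) :
    ContinuousOn (runSup f) (Ioi (0:ℝ)) :=
  fun x hx => (runSup_contAt hf hb hx).continuousWithinAt

lemma runSup_inv (hf : ContinuousOn f (Ioi (0:ℝ)))
    (hb : ∀ r > (0:ℝ), BddAbove (f '' Ioc (0:ℝ) r))
    (hlow : ∀ s > (0:ℝ), ∃ a > (0:ℝ), runSup f a < s)
    (hhigh : ∀ s : ℝ, ∃ b > (0:ℝ), s < runSup f b)
    {s : ℝ} (hs : 0 < s) :
    0 < sSup {t | 0 < t ∧ runSup f t = s} ∧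
      runSup f (sSup {t | 0 < t ∧ runSup f t = s}) = s ∧
      ∀ t, sSup {t | 0 < t ∧ runSup f t = s} < t → s < runSup f t := by
  obtain ⟨a, ha0, haF⟩ := hlow s hs
  obtain ⟨b0, hb00, hbF⟩ := hhigh s
  set b := max b0 a with hbdef
  have hb0 : 0 < b := lt_of_lt_of_le hb00 (le_max_left _ _)
  have hab : a ≤ b := le_max_right _ _
  have hFb : s < runSup f b := lt_of_lt_of_le hbF (runSup_mono hb hb00 (le_max_left _ _))
  have hcont' : ContinuousOn (runSup f) (Icc a b) :=
    (runSup_contOn hf hb).mono (fun t ht => lt_of_lt_of_le ha0 ht.1)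
  have hmem : s ∈ Icc (runSup f a) (runSup f b) := ⟨haF.le, hFb.le⟩
  obtain ⟨t₀, ht₀, hFt₀⟩ := intermediate_value_Icc hab hcont' hmem
  have ht₀pos : 0 < t₀ := lt_of_lt_of_le ha0 ht₀.1
  set S := {t | 0 < t ∧ runSup f t = s} with hSdef
  have hSne : S.Nonempty := ⟨t₀, ht₀pos, hFt₀⟩
  have hSbdd : BddAbove S := by
    refine ⟨b, fun t ht => ?_⟩
    by_contra hbt
    push_neg at hbt
    have : runSup f b ≤ runSup f t := runSup_mono hb hb0 hbt.le
    rw [ht.2] at this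
    linarith
  set T := sSup S with hTdef
  have hT0 : 0 < T := lt_of_lt_of_le ht₀pos (le_csSup hSbdd ⟨ht₀pos, hFt₀⟩)
  have hge : s ≤ runSup f T := by
    have h1 : runSup f t₀ ≤ runSup f T :=
      runSup_mono hb ht₀pos (le_csSup hSbdd ⟨ht₀pos, hFt₀⟩)
    rw [hFt₀] at h1
    exact h1
  have hle : runSup f T ≤ s := by
    by_contra hgt
    push_neg at hgt
    have hc : ContinuousAt (runSup f) T := runSup_contAt hf hb hT0
    have hev : runSup f ⁻¹' Ioi s ∈ nhds T :=
      hc.preimage_mem_nhds (isOpen_Ioi.mem_nhds hgt)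
    rw [Metric.mem_nhds_iff] at hev
    obtain ⟨δ, hδ, hball⟩ := hev
    have hub : ∀ t ∈ S, t ≤ T - δ / 2 := by
      intro t ht
      by_contra hc2
      push_neg at hc2
      have htT : t ≤ T := le_csSup hSbdd ht
      have : t ∈ Metric.ball T δ := by
        rw [Metric.mem_ball, Real.dist_eq, abs_of_nonpos (by linarith)]
        linarith
      have := hball this
      rw [mem_preimage, mem_Ioi, ht.2] at this
      exact lt_irrefl s this
    have : T ≤ T - δ / 2 := csSup_le hSne hub
    linarith
  have hFT : runSup f T = s := le_antisymm hle hge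
  refine ⟨hT0, hFT, ?_⟩
  intro t hTt
  have h1 : s ≤ runSup f t := by
    have := runSup_mono hb hT0 hTt.le
    rw [hFT] at this
    exact this
  rcases h1.lt_or_eq with h | h
  · exact h
  · exfalso
    have : t ∈ S := ⟨hT0.trans hTt, h.symm⟩
    have := le_csSup hSbdd this
    linarith

end RunSup

section Scaling

variable {ν : Measure ℝ} [SigmaFinite ν] {σ : ℝ} {φ'' : ℝ → ℝ} {α c x₀ : ℝ}

lemma bigPhi_scal (hα : 0 < α) (hc : c ∈ Ioc (0:ℝ) 1)
    (hscal : WLSC φ'' (α - 2) c x₀) {x : ℝ} (hx : x₀ < x) {l : ℝ} (hl : 1 ≤ l) :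
    c * l ^ α * bigPhi φ'' x ≤ bigPhi φ'' (l * x) := by
  have hl0 : (0:ℝ) < l := lt_of_lt_of_le one_pos hl
  have hkey := hscal l hl x hx
  have hpow : l ^ (2:ℕ) * l ^ (α - 2) = l ^ α := by
    rw [← Real.rpow_natCast l 2, ← Real.rpow_add hl0]
    norm_num
  have h2 : (l * x) ^ 2 * (c * l ^ (α - 2) * φ'' x) ≤ (l * x) ^ 2 * φ'' (l * x) :=
    mul_le_mul_of_nonneg_left hkey (by positivity)
  calc c * l ^ α * bigPhi φ'' x = (l * x) ^ 2 * (c * l ^ (α - 2) * φ'' x) := by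
        unfold bigPhi
        rw [← hpow]
        ring
  _ ≤ (l * x) ^ 2 * φ'' (l * x) := h2
  _ = bigPhi φ'' (l * x) := rfl

lemma bddAbove_bigPhi (hint : ∫⁻ x in Ioi (0:ℝ), ENNReal.ofReal (min 1 (x ^ 2)) ∂ν ≠ ⊤)
    (hφ'' : ∀ l : ℝ, 0 < l → φ'' l = 2 * σ ^ 2 +
      ∫ x in Ioi (0:ℝ), x ^ 2 * Real.exp (-(l * x)) ∂ν) :
    ∀ r > (0:ℝ), BddAbove (bigPhi φ'' '' Ioc (0:ℝ) r) := by
  intro r hr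
  refine ⟨4 * auxG σ ν r, ?_⟩
  rintro z ⟨y, hy, rfl⟩
  calc bigPhi φ'' y ≤ 4 * auxG σ ν y := bigPhi_le_four_g hint hφ'' hy.1
  _ ≤ 4 * auxG σ ν r := by
      have := auxG_mono (σ := σ) hint hy.1.le hy.2
      linarith

lemma tail_le (hint : ∫⁻ x in Ioi (0:ℝ), ENNReal.ofReal (min 1 (x ^ 2)) ∂ν ≠ ⊤)
    (hφ'' : ∀ l : ℝ, 0 < l → φ'' l = 2 * σ ^ 2 +
      ∫ x in Ioi (0:ℝ), x ^ 2 * Real.exp (-(l * x)) ∂ν)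
    (hUV : 0 < σ ∨ ∫⁻ x in Ioo (0:ℝ) 1, ENNReal.ofReal x ∂ν = ⊤)
    (hα : 0 < α) (hc : c ∈ Ioc (0:ℝ) 1) (hx₀ : 0 ≤ x₀)
    (hscal : WLSC φ'' (α - 2) c x₀) :
    ∃ CT : ℝ, 0 ≤ CT ∧ ∀ x, x₀ < x →
      (ν (Ioi x⁻¹)).toReal ≤ CT * runSup (bigPhi φ'') x := by
  set q : ℝ := (2:ℝ) ^ (-α) with hqdef
  have hq0 : 0 < q := Real.rpow_pos_of_pos two_pos _
  have hq1 : q < 1 := by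
    apply Real.rpow_lt_one_of_one_lt_of_neg one_lt_two
    linarith
  have hiq : (0:ℝ) ≤ (1 - q)⁻¹ := inv_nonneg.2 (by linarith)
  -- dyadic bound
  have hdy : ∀ x : ℝ, x₀ < x → ∀ k : ℕ, x₀ < x / 2 ^ k →
      ν (Ioc ((2:ℝ) ^ k * x⁻¹) ((2:ℝ) ^ (k + 1) * x⁻¹))
        ≤ ENNReal.ofReal ((Real.exp 2 * c⁻¹ * bigPhi φ'' x) * q ^ k) := by
    intro x hx k hk
    have hx0 : (0:ℝ) < x := lt_of_le_of_lt hx₀ hx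
    have hy0 : (0:ℝ) < x / 2 ^ k := by positivity
    have h1 := tail_dyadic (σ := σ) hint hφ'' hy0
    have hseteq : Ioc ((x / 2 ^ k))⁻¹ (2 * (x / 2 ^ k)⁻¹)
        = Ioc ((2:ℝ) ^ k * x⁻¹) ((2:ℝ) ^ (k + 1) * x⁻¹) := by
      have e1 : ((x / 2 ^ k))⁻¹ = (2:ℝ) ^ k * x⁻¹ := by
        rw [inv_div]
        rw [div_eq_mul_inv]
      have e2 : 2 * ((x / 2 ^ k))⁻¹ = (2:ℝ) ^ (k + 1) * x⁻¹ := by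
        rw [e1, pow_succ]
        ring
      rw [e2, e1]
    have hfin : ν (Ioc ((2:ℝ) ^ k * x⁻¹) ((2:ℝ) ^ (k + 1) * x⁻¹)) < ⊤ := by
      apply lt_of_le_of_lt (measure_mono Ioc_subset_Ioi_self)
      exact measure_Ioi_lt_top hint (by positivity)
    have hΦ : bigPhi φ'' (x / 2 ^ k) ≤ c⁻¹ * q ^ k * bigPhi φ'' x := by
      have hl : (1:ℝ) ≤ 2 ^ k := one_le_pow₀ one_le_two
      have hsc := bigPhi_scal hα hc hscal hk hl
      have heq : (2:ℝ) ^ k * (x / 2 ^ k) = x := by field_simp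
      rw [heq] at hsc
      have hT0 : (0:ℝ) < ((2:ℝ) ^ k) ^ α := Real.rpow_pos_of_pos (by positivity) _
      have hqk : ((2:ℝ) ^ k) ^ α * q ^ k = 1 := by
        rw [hqdef, ← Real.rpow_natCast (2:ℝ) k, ← Real.rpow_natCast ((2:ℝ) ^ (-α)) k]
        rw [← Real.rpow_mul (by norm_num : (0:ℝ) ≤ 2), ← Real.rpow_mul (by norm_num : (0:ℝ) ≤ 2)]
        rw [← Real.rpow_add two_pos]
        rw [show (k:ℝ) * α + -α * k = 0 by ring, Real.rpow_zero]
      have hc0 : 0 < c := hc.1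
      have step : bigPhi φ'' (x / 2 ^ k) ≤ (c * ((2:ℝ) ^ k) ^ α)⁻¹ * bigPhi φ'' x := by
        rw [le_inv_mul_iff₀ (by positivity)]
        have heq2 : (c * ((2:ℝ) ^ k) ^ α) * bigPhi φ'' (x / 2 ^ k)
            = c * ((2:ℝ) ^ k) ^ α * bigPhi φ'' (x / 2 ^ k) := by ring
        linarith [hsc]
      calc bigPhi φ'' (x / 2 ^ k) ≤ (c * ((2:ℝ) ^ k) ^ α)⁻¹ * bigPhi φ'' x := step
      _ = c⁻¹ * q ^ k * bigPhi φ'' x := by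
          rw [mul_inv]
          congr 2
          exact inv_eq_of_mul_eq_one_right hqk
    calc ν (Ioc ((2:ℝ) ^ k * x⁻¹) ((2:ℝ) ^ (k + 1) * x⁻¹))
        = ENNReal.ofReal ((ν (Ioc ((2:ℝ) ^ k * x⁻¹) ((2:ℝ) ^ (k + 1) * x⁻¹))).toReal) :=
          (ENNReal.ofReal_toReal hfin.ne).symm
    _ ≤ ENNReal.ofReal ((Real.exp 2 * c⁻¹ * bigPhi φ'' x) * q ^ k) := by
        apply ENNReal.ofReal_le_ofReal
        rw [← hseteq]
        calc (ν (Ioc ((x / 2 ^ k))⁻¹ (2 * (x / 2 ^ k)⁻¹))).toReal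
            ≤ Real.exp 2 * bigPhi φ'' (x / 2 ^ k) := h1
        _ ≤ Real.exp 2 * (c⁻¹ * q ^ k * bigPhi φ'' x) :=
            mul_le_mul_of_nonneg_left hΦ (Real.exp_pos 2).le
        _ = (Real.exp 2 * c⁻¹ * bigPhi φ'' x) * q ^ k := by ring
  -- geometric sum bound in ENNReal
  have hgeom : ∀ x : ℝ, 0 < bigPhi φ'' x →
      (∑' k : ℕ, ENNReal.ofReal ((Real.exp 2 * c⁻¹ * bigPhi φ'' x) * q ^ k))
        = ENNReal.ofReal ((Real.exp 2 * c⁻¹ * bigPhi φ'' x) * (1 - q)⁻¹) := by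
    intro x hPx
    have hA0 : 0 ≤ Real.exp 2 * c⁻¹ * bigPhi φ'' x := by
      have := (Real.exp_pos 2).le
      have hc0 := hc.1
      positivity
    have h1 : ∀ k : ℕ, ENNReal.ofReal ((Real.exp 2 * c⁻¹ * bigPhi φ'' x) * q ^ k)
        = ENNReal.ofReal (Real.exp 2 * c⁻¹ * bigPhi φ'' x) * (ENNReal.ofReal q) ^ k := by
      intro k
      rw [ENNReal.ofReal_mul hA0, ENNReal.ofReal_pow hq0.le]
    calc (∑' k : ℕ, ENNReal.ofReal ((Real.exp 2 * c⁻¹ * bigPhi φ'' x) * q ^ k))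
        = ∑' k : ℕ, ENNReal.ofReal (Real.exp 2 * c⁻¹ * bigPhi φ'' x) * (ENNReal.ofReal q) ^ k := by
          exact tsum_congr h1
    _ = ENNReal.ofReal (Real.exp 2 * c⁻¹ * bigPhi φ'' x) * ∑' k : ℕ, (ENNReal.ofReal q) ^ k :=
          ENNReal.tsum_mul_left
    _ = ENNReal.ofReal (Real.exp 2 * c⁻¹ * bigPhi φ'' x) * (1 - ENNReal.ofReal q)⁻¹ := by
          rw [ENNReal.tsum_geometric]
    _ = ENNReal.ofReal ((Real.exp 2 * c⁻¹ * bigPhi φ'' x) * (1 - q)⁻¹) := by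
          have h2 : (1 : ENNReal) - ENNReal.ofReal q = ENNReal.ofReal (1 - q) := by
            rw [ENNReal.ofReal_sub 1 hq0.le, ENNReal.ofReal_one]
          rw [h2, ← ENNReal.ofReal_inv_of_pos (by linarith : (0:ℝ) < 1 - q),
            ← ENNReal.ofReal_mul hA0]
  have hPpos : ∀ x : ℝ, 0 < x → 0 < bigPhi φ'' x := fun x hx => bigPhi_pos hint hφ'' hUV hx
  have hmem : ∀ x : ℝ, 0 < x → ∀ t : ℝ, x⁻¹ < t → ∀ hex : ∃ n : ℕ, t ≤ 2 ^ (n + 1) * x⁻¹,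
      t ∈ Ioc ((2:ℝ) ^ (Nat.find hex) * x⁻¹) ((2:ℝ) ^ (Nat.find hex + 1) * x⁻¹) := by
    intro x hx t ht hex
    constructor
    · rcases Nat.eq_zero_or_pos (Nat.find hex) with h0 | hposf
      · rw [h0]; simpa using ht
      · obtain ⟨m, hm⟩ := Nat.exists_eq_succ_of_ne_zero (Nat.pos_iff_ne_zero.1 hposf)
        have hmin := Nat.find_min hex (m := m) (by omega)
        push_neg at hmin
        rw [hm]
        exact hmin
    · exact Nat.find_spec hex
  have hA0' : ∀ x : ℝ, 0 < x → 0 ≤ (Real.exp 2 * c⁻¹ * bigPhi φ'' x) * (1 - q)⁻¹ := by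
    intro x hx
    have h1 := (hPpos x hx).le
    have h2 := (Real.exp_pos 2).le
    have hc0 := hc.1
    exact mul_nonneg (by positivity) hiq
  rcases eq_or_lt_of_le hx₀ with h0 | hpos₀
  · -- x₀ = 0
    have hc0 := hc.1
    refine ⟨Real.exp 2 * c⁻¹ * (1 - q)⁻¹, mul_nonneg (by positivity) hiq, ?_⟩
    intro x hx
    have hx0 : (0:ℝ) < x := lt_of_le_of_lt hx₀ hx
    have hxinv : (0:ℝ) < x⁻¹ := by positivity
    have hsub : Ioi x⁻¹ ⊆ ⋃ k : ℕ, Ioc ((2:ℝ) ^ k * x⁻¹) ((2:ℝ) ^ (k + 1) * x⁻¹) := by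
      intro t ht
      have ht' : x⁻¹ < t := ht
      have hex : ∃ n : ℕ, t ≤ 2 ^ (n + 1) * x⁻¹ := by
        obtain ⟨n, hn⟩ := pow_unbounded_of_one_lt (t * x) one_lt_two
        refine ⟨n, ?_⟩
        have heqt : t = (t * x) * x⁻¹ := by field_simp
        rw [heqt]
        have h2 : t * x ≤ 2 ^ (n + 1) :=
          hn.le.trans (pow_le_pow_right₀ one_le_two (Nat.le_succ n))
        exact mul_le_mul_of_nonneg_right h2 hxinv.le
      exact mem_iUnion.2 ⟨Nat.find hex, hmem x hx0 t ht' hex⟩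
    have hchain : ν (Ioi x⁻¹)
        ≤ ENNReal.ofReal ((Real.exp 2 * c⁻¹ * bigPhi φ'' x) * (1 - q)⁻¹) := by
      calc ν (Ioi x⁻¹) ≤ ν (⋃ k : ℕ, Ioc ((2:ℝ) ^ k * x⁻¹) ((2:ℝ) ^ (k + 1) * x⁻¹)) :=
            measure_mono hsub
      _ ≤ ∑' k : ℕ, ν (Ioc ((2:ℝ) ^ k * x⁻¹) ((2:ℝ) ^ (k + 1) * x⁻¹)) := measure_iUnion_le _
      _ ≤ ∑' k : ℕ, ENNReal.ofReal ((Real.exp 2 * c⁻¹ * bigPhi φ'' x) * q ^ k) := by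
            apply ENNReal.tsum_le_tsum
            intro k
            apply hdy x hx k
            rw [← h0]
            positivity
      _ = ENNReal.ofReal ((Real.exp 2 * c⁻¹ * bigPhi φ'' x) * (1 - q)⁻¹) :=
            hgeom x (hPpos x hx0)
    have hreal := ENNReal.toReal_le_of_le_ofReal (hA0' x hx0) hchain
    have hΦle : bigPhi φ'' x ≤ runSup (bigPhi φ'') x :=
      le_runSup (bddAbove_bigPhi hint hφ'') ⟨hx0, le_rfl⟩
    have he2c : (0:ℝ) ≤ Real.exp 2 * c⁻¹ * (1 - q)⁻¹ := mul_nonneg (by positivity) hiq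
    calc (ν (Ioi x⁻¹)).toReal ≤ (Real.exp 2 * c⁻¹ * bigPhi φ'' x) * (1 - q)⁻¹ := hreal
    _ = (Real.exp 2 * c⁻¹ * (1 - q)⁻¹) * bigPhi φ'' x := by ring
    _ ≤ (Real.exp 2 * c⁻¹ * (1 - q)⁻¹) * runSup (bigPhi φ'') x :=
        mul_le_mul_of_nonneg_left hΦle he2c
  · -- 0 < x₀
    have hc0 := hc.1
    have hμfin : ν (Ioi x₀⁻¹) < ⊤ := measure_Ioi_lt_top hint (by positivity)
    set μ₀ := (ν (Ioi x₀⁻¹)).toReal with hμdef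
    have hμ0 : 0 ≤ μ₀ := ENNReal.toReal_nonneg
    have hP₀ : 0 < bigPhi φ'' x₀ := hPpos x₀ hpos₀
    refine ⟨Real.exp 2 * c⁻¹ * (1 - q)⁻¹ + μ₀ / bigPhi φ'' x₀,
      add_nonneg (mul_nonneg (by positivity) hiq) (by positivity), ?_⟩
    intro x hx
    have hx0 : (0:ℝ) < x := hpos₀.trans hx
    have hxinv : (0:ℝ) < x⁻¹ := by positivity
    have hexK : ∃ n : ℕ, x ≤ x₀ * 2 ^ n := by
      obtain ⟨n, hn⟩ := pow_unbounded_of_one_lt (x / x₀) one_lt_two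
      refine ⟨n, ?_⟩
      rw [div_lt_iff₀ hpos₀] at hn
      linarith
    set K := Nat.find hexK with hKdef
    have hKspec : x ≤ x₀ * 2 ^ K := Nat.find_spec hexK
    have hKmin : ∀ k, k < K → x₀ * 2 ^ k < x := by
      intro k hk
      have := Nat.find_min hexK hk
      push_neg at this
      exact this
    have hKpos : 0 < K := by
      rcases Nat.eq_zero_or_pos K with h | h
      · exfalso
        have h2 := hKspec
        rw [h] at h2
        simp at h2
        linarith
      · exact h
    have hone_le : (1:ℝ) ≤ 2 ^ K := one_le_pow₀ one_le_two
    have hsplit : Ioi x⁻¹ = Ioc x⁻¹ ((2:ℝ) ^ K * x⁻¹) ∪ Ioi ((2:ℝ) ^ K * x⁻¹) := by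
      rw [Ioc_union_Ioi_eq_Ioi]
      nlinarith
    have hc1 : ν (Ioc x⁻¹ ((2:ℝ) ^ K * x⁻¹))
        ≤ ENNReal.ofReal ((Real.exp 2 * c⁻¹ * bigPhi φ'' x) * (1 - q)⁻¹) := by
      have hsub1 : Ioc x⁻¹ ((2:ℝ) ^ K * x⁻¹)
          ⊆ ⋃ k ∈ Finset.range K, Ioc ((2:ℝ) ^ k * x⁻¹) ((2:ℝ) ^ (k + 1) * x⁻¹) := by
        intro t ht
        have hKm1 : K - 1 + 1 = K := Nat.succ_pred_eq_of_pos hKpos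
        have hwit : t ≤ 2 ^ (K - 1 + 1) * x⁻¹ := by rw [hKm1]; exact ht.2
        have hex : ∃ n : ℕ, t ≤ 2 ^ (n + 1) * x⁻¹ := ⟨K - 1, hwit⟩
        have hfle : Nat.find hex ≤ K - 1 := Nat.find_le hwit
        have hflt : Nat.find hex < K := by omega
        exact mem_iUnion₂.2 ⟨Nat.find hex, Finset.mem_range.2 hflt, hmem x hx0 t ht.1 hex⟩
      calc ν (Ioc x⁻¹ ((2:ℝ) ^ K * x⁻¹))
          ≤ ν (⋃ k ∈ Finset.range K, Ioc ((2:ℝ) ^ k * x⁻¹) ((2:ℝ) ^ (k + 1) * x⁻¹)) :=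
            measure_mono hsub1
      _ ≤ ∑ k ∈ Finset.range K, ν (Ioc ((2:ℝ) ^ k * x⁻¹) ((2:ℝ) ^ (k + 1) * x⁻¹)) :=
            measure_biUnion_finset_le _ _
      _ ≤ ∑ k ∈ Finset.range K, ENNReal.ofReal ((Real.exp 2 * c⁻¹ * bigPhi φ'' x) * q ^ k) := by
            apply Finset.sum_le_sum
            intro k hk
            apply hdy x hx k
            have h2 := hKmin k (Finset.mem_range.1 hk)
            rw [lt_div_iff₀ (by positivity : (0:ℝ) < 2 ^ k)]
            linarith
      _ ≤ ∑' k : ℕ, ENNReal.ofReal ((Real.exp 2 * c⁻¹ * bigPhi φ'' x) * q ^ k) :=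
            ENNReal.sum_le_tsum _
      _ = ENNReal.ofReal ((Real.exp 2 * c⁻¹ * bigPhi φ'' x) * (1 - q)⁻¹) :=
            hgeom x (hPpos x hx0)
    have hc2 : ν (Ioi ((2:ℝ) ^ K * x⁻¹)) ≤ ENNReal.ofReal μ₀ := by
      have hsub2 : Ioi ((2:ℝ) ^ K * x⁻¹) ⊆ Ioi x₀⁻¹ := by
        apply Ioi_subset_Ioi
        have h1 : x / 2 ^ K ≤ x₀ := by
          rw [div_le_iff₀ (by positivity : (0:ℝ) < 2 ^ K)]
          linarith
        have h2 : x₀⁻¹ ≤ (x / 2 ^ K)⁻¹ := inv_anti₀ (by positivity) h1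
        calc x₀⁻¹ ≤ (x / 2 ^ K)⁻¹ := h2
        _ = 2 ^ K * x⁻¹ := by rw [inv_div, div_eq_mul_inv]
      calc ν (Ioi ((2:ℝ) ^ K * x⁻¹)) ≤ ν (Ioi x₀⁻¹) := measure_mono hsub2
      _ = ENNReal.ofReal μ₀ := (ENNReal.ofReal_toReal hμfin.ne).symm
    have htotal : ν (Ioi x⁻¹)
        ≤ ENNReal.ofReal ((Real.exp 2 * c⁻¹ * bigPhi φ'' x) * (1 - q)⁻¹ + μ₀) := by
      calc ν (Ioi x⁻¹) ≤ ν (Ioc x⁻¹ ((2:ℝ) ^ K * x⁻¹)) + ν (Ioi ((2:ℝ) ^ K * x⁻¹)) := by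
            rw [hsplit]
            exact measure_union_le _ _
      _ ≤ ENNReal.ofReal ((Real.exp 2 * c⁻¹ * bigPhi φ'' x) * (1 - q)⁻¹) + ENNReal.ofReal μ₀ :=
            add_le_add hc1 hc2
      _ = ENNReal.ofReal ((Real.exp 2 * c⁻¹ * bigPhi φ'' x) * (1 - q)⁻¹ + μ₀) :=
            (ENNReal.ofReal_add (hA0' x hx0) hμ0).symm
    have hreal := ENNReal.toReal_le_of_le_ofReal (by linarith [hA0' x hx0]) htotal
    have hΦle : bigPhi φ'' x ≤ runSup (bigPhi φ'') x :=
      le_runSup (bddAbove_bigPhi hint hφ'') ⟨hx0, le_rfl⟩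
    have hΦ₀le : bigPhi φ'' x₀ ≤ runSup (bigPhi φ'') x :=
      le_runSup (bddAbove_bigPhi hint hφ'') ⟨hpos₀, hx.le⟩
    have he2c : (0:ℝ) ≤ Real.exp 2 * c⁻¹ * (1 - q)⁻¹ := mul_nonneg (by positivity) hiq
    have t2 : (Real.exp 2 * c⁻¹ * (1 - q)⁻¹) * bigPhi φ'' x
        ≤ (Real.exp 2 * c⁻¹ * (1 - q)⁻¹) * runSup (bigPhi φ'') x :=
      mul_le_mul_of_nonneg_left hΦle he2c
    have t3 : μ₀ = (μ₀ / bigPhi φ'' x₀) * bigPhi φ'' x₀ := by field_simp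
    have t4 : (μ₀ / bigPhi φ'' x₀) * bigPhi φ'' x₀ ≤ (μ₀ / bigPhi φ'' x₀) * runSup (bigPhi φ'') x :=
      mul_le_mul_of_nonneg_left hΦ₀le (by positivity)
    calc (ν (Ioi x⁻¹)).toReal ≤ (Real.exp 2 * c⁻¹ * bigPhi φ'' x) * (1 - q)⁻¹ + μ₀ := hreal
    _ ≤ (Real.exp 2 * c⁻¹ * (1 - q)⁻¹) * runSup (bigPhi φ'') x
        + (μ₀ / bigPhi φ'' x₀) * runSup (bigPhi φ'') x := by nlinarith [t2, t3, t4]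
    _ = (Real.exp 2 * c⁻¹ * (1 - q)⁻¹ + μ₀ / bigPhi φ'' x₀) * runSup (bigPhi φ'') x := by ring

end Scaling

section Continuity

variable {ν : Measure ℝ} [SigmaFinite ν] {σ : ℝ} {φ'' : ℝ → ℝ}

lemma bigPhi_contOn (hint : ∫⁻ x in Ioi (0:ℝ), ENNReal.ofReal (min 1 (x ^ 2)) ∂ν ≠ ⊤)
    (hφ'' : ∀ l : ℝ, 0 < l → φ'' l = 2 * σ ^ 2 +
      ∫ x in Ioi (0:ℝ), x ^ 2 * Real.exp (-(l * x)) ∂ν) :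
    ContinuousOn (bigPhi φ'') (Ioi (0:ℝ)) := by
  have hphi : ContinuousOn φ'' (Ioi (0:ℝ)) := by
    have hgc : ContinuousOn
        (fun l => 2 * σ ^ 2 + ∫ x in Ioi (0:ℝ), x ^ 2 * Real.exp (-(l * x)) ∂ν)
        (Ioi (0:ℝ)) := by
      intro l₀ hl₀
      have hl₀' : (0:ℝ) < l₀ := hl₀
      apply ContinuousAt.continuousWithinAt
      apply ContinuousAt.add continuousAt_const
      apply continuousAt_of_dominated (bound := fun x => x ^ 2 * Real.exp (-(l₀ / 2 * x)))
      · filter_upwards with l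
        exact Continuous.aestronglyMeasurable (by fun_prop)
      · have hnb : Ioi (l₀ / 2) ∈ nhds l₀ := Ioi_mem_nhds (by linarith)
        filter_upwards [hnb] with l hl
        rw [ae_restrict_iff' measurableSet_Ioi]
        filter_upwards with x hx
        have hx0 : (0:ℝ) < x := hx
        have hll : l₀ / 2 ≤ l := le_of_lt hl
        rw [Real.norm_eq_abs, abs_of_nonneg (by positivity)]
        apply mul_le_mul_of_nonneg_left _ (sq_nonneg x)
        apply Real.exp_le_exp.2
        nlinarith
      · exact int_sq_exp hint (by linarith : (0:ℝ) < l₀ / 2)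
      · filter_upwards with x
        fun_prop
    exact hgc.congr (fun l hl => hφ'' l hl)
  have : ContinuousOn (fun x : ℝ => x ^ 2 * φ'' x) (Ioi (0:ℝ)) :=
    (continuous_pow 2).continuousOn.mul hphi
  exact this

lemma rePsi_contOn (hint : ∫⁻ x in Ioi (0:ℝ), ENNReal.ofReal (min 1 (x ^ 2)) ∂ν ≠ ⊤)
    (σ : ℝ) : ContinuousOn (rePsi σ ν) (Ioi (0:ℝ)) := by
  apply Continuous.continuousOn
  have h1 : Continuous fun ξ : ℝ => σ ^ 2 * ξ ^ 2 := by fun_prop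
  have h2 : Continuous fun ξ : ℝ => ∫ x in Ioi (0:ℝ), (1 - Real.cos (ξ * x)) ∂ν := by
    rw [continuous_iff_continuousAt]
    intro ξ₀
    apply continuousAt_of_dominated
      (bound := fun x => 2 * max 1 ((|ξ₀| + 1) ^ 2) * min 1 (x ^ 2))
    · filter_upwards with ξ
      exact Continuous.aestronglyMeasurable (by fun_prop)
    · have hnb : Metric.ball ξ₀ 1 ∈ nhds ξ₀ := Metric.ball_mem_nhds ξ₀ one_pos
      filter_upwards [hnb] with ξ hξ
      rw [ae_restrict_iff' measurableSet_Ioi]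
      filter_upwards with x hx
      have hξabs : |ξ| ≤ |ξ₀| + 1 := by
        rw [Metric.mem_ball, Real.dist_eq] at hξ
        have := abs_sub_abs_le_abs_sub ξ ξ₀
        linarith
      have hsq : ξ ^ 2 ≤ (|ξ₀| + 1) ^ 2 := by
        have h0 : (0:ℝ) ≤ |ξ₀| + 1 := by positivity
        nlinarith [sq_abs ξ, abs_nonneg ξ]
      rw [Real.norm_eq_abs, abs_of_nonneg (by nlinarith [Real.cos_le_one (ξ * x)])]
      calc 1 - Real.cos (ξ * x) ≤ 2 * min 1 ((ξ * x) ^ 2) := aux_one_sub_cos_le _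
      _ = 2 * min 1 (ξ ^ 2 * x ^ 2) := by ring_nf
      _ ≤ 2 * (max 1 (ξ ^ 2) * min 1 (x ^ 2)) := by
          have := aux_min_mul_bound (ξ ^ 2) x (sq_nonneg ξ)
          linarith
      _ ≤ 2 * max 1 ((|ξ₀| + 1) ^ 2) * min 1 (x ^ 2) := by
          have h1 : max 1 (ξ ^ 2) ≤ max 1 ((|ξ₀| + 1) ^ 2) := max_le_max le_rfl hsq
          have h2 : (0:ℝ) ≤ min 1 (x ^ 2) := le_min zero_le_one (sq_nonneg x)
          nlinarith
    · exact ((int_min_one_sq hint).const_mul _)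
    · filter_upwards with x
      fun_prop
  exact h1.add h2

lemma auxG_tendsto_zero (hint : ∫⁻ x in Ioi (0:ℝ), ENNReal.ofReal (min 1 (x ^ 2)) ∂ν ≠ ⊤)
    (σ : ℝ) : Tendsto (auxG σ ν) (nhdsWithin 0 (Ioi (0:ℝ))) (nhds 0) := by
  have hM : Tendsto (auxM ν) (nhdsWithin 0 (Ioi (0:ℝ))) (nhds 0) := by
    have key : Tendsto (auxM ν) (nhdsWithin 0 (Ioi (0:ℝ)))
        (nhds (∫ x in Ioi (0:ℝ), (0:ℝ) ∂ν)) := by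
      apply tendsto_integral_filter_of_dominated_convergence (bound := fun x => min 1 (x ^ 2))
      · filter_upwards with r
        exact Continuous.aestronglyMeasurable (by fun_prop)
      · have hev : Ioc (0:ℝ) 1 ∈ nhdsWithin 0 (Ioi (0:ℝ)) := by
          apply mem_nhdsWithin.2
          exact ⟨Ioo (-1) 1, isOpen_Ioo, by norm_num, fun t ht => ⟨ht.2, ht.1.2.le⟩⟩
        filter_upwards [hev] with r hr
        filter_upwards with x
        rw [Real.norm_eq_abs, abs_of_nonneg (le_min zero_le_one (by positivity))]
        have : r ^ 2 * x ^ 2 ≤ 1 * x ^ 2 := by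
          apply mul_le_mul_of_nonneg_right _ (sq_nonneg x)
          nlinarith [hr.1, hr.2]
        calc min 1 (r ^ 2 * x ^ 2) ≤ min 1 (x ^ 2) := min_le_min le_rfl (by linarith)
        _ ≤ min 1 (x ^ 2) := le_rfl
      · exact int_min_one_sq hint
      · filter_upwards with x
        have hcont : ContinuousAt (fun r : ℝ => min 1 (r ^ 2 * x ^ 2)) 0 := by fun_prop
        have h00 : min 1 ((0:ℝ) ^ 2 * x ^ 2) = 0 := by norm_num
        have := hcont.tendsto
        rw [h00] at this
        exact this.mono_left nhdsWithin_le_nhds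
    simpa using key
  have hsq : Tendsto (fun r : ℝ => σ ^ 2 * r ^ 2) (nhdsWithin 0 (Ioi (0:ℝ))) (nhds 0) := by
    have hcont : ContinuousAt (fun r : ℝ => σ ^ 2 * r ^ 2) 0 := by fun_prop
    have h00 : σ ^ 2 * (0:ℝ) ^ 2 = 0 := by ring
    have := hcont.tendsto
    rw [h00] at this
    exact this.mono_left nhdsWithin_le_nhds
  have := hsq.add hM
  rw [add_zero] at this
  exact this

end Continuity

section Assembly

variable {ν : Measure ℝ} [SigmaFinite ν] {σ : ℝ} {φ'' : ℝ → ℝ} {α c x₀ : ℝ}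

lemma rpow_recover {l β : ℝ} (hl : 0 ≤ l) (hβ : β ≠ 0) : (l ^ β) ^ β⁻¹ = l := by
  rw [← Real.rpow_mul hl, mul_inv_cancel₀ hβ, Real.rpow_one]

lemma le_rpow_inv_of_rpow_le {l B β : ℝ} (hβ : 0 < β) (hl : 0 ≤ l) (h : l ^ β ≤ B) :
    l ≤ B ^ (1 / β) := by
  have h1 : (l ^ β) ^ (1 / β) ≤ B ^ (1 / β) :=
    Real.rpow_le_rpow (Real.rpow_nonneg hl β) h (by positivity)
  rw [one_div] at h1 ⊢
  rwa [rpow_recover hl (ne_of_gt hβ)] at h1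

lemma bddAbove_rePsi_Ioc (hint : ∫⁻ x in Ioi (0:ℝ), ENNReal.ofReal (min 1 (x ^ 2)) ∂ν ≠ ⊤)
    (σ : ℝ) : ∀ r > (0:ℝ), BddAbove (rePsi σ ν '' Ioc (0:ℝ) r) := by
  intro r hr
  refine ⟨2 * auxG σ ν r, ?_⟩
  rintro z ⟨y, hy, rfl⟩
  exact rePsi_le_two_g hint (by rw [abs_of_pos hy.1]; exact hy.2)

lemma auxG_le_CPhi (hint : ∫⁻ x in Ioi (0:ℝ), ENNReal.ofReal (min 1 (x ^ 2)) ∂ν ≠ ⊤)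
    (hφ'' : ∀ l : ℝ, 0 < l → φ'' l = 2 * σ ^ 2 +
      ∫ x in Ioi (0:ℝ), x ^ 2 * Real.exp (-(l * x)) ∂ν)
    (hUV : 0 < σ ∨ ∫⁻ x in Ioo (0:ℝ) 1, ENNReal.ofReal x ∂ν = ⊤)
    (hα : 0 < α) (hc : c ∈ Ioc (0:ℝ) 1) (hx₀ : 0 ≤ x₀)
    (hscal : WLSC φ'' (α - 2) c x₀) :
    ∃ C : ℝ, 1 ≤ C ∧ ∀ x, x₀ < x → auxG σ ν x ≤ C * runSup (bigPhi φ'') x := by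
  obtain ⟨CT, hCT0, hCT⟩ := tail_le hint hφ'' hUV hα hc hx₀ hscal
  refine ⟨CT + 4, by linarith, ?_⟩
  intro x hx
  have hx0 : (0:ℝ) < x := lt_of_le_of_lt hx₀ hx
  have hxinv : (0:ℝ) < x⁻¹ := by positivity
  have hsetu : Ioc (0:ℝ) x⁻¹ ∪ Ioi x⁻¹ = Ioi 0 := Ioc_union_Ioi_eq_Ioi hxinv.le
  have hint1 : IntegrableOn (fun s => min 1 (x ^ 2 * s ^ 2)) (Ioc (0:ℝ) x⁻¹) ν :=
    (int_min_one_mul hint x).mono_set Ioc_subset_Ioi_self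
  have hint2 : IntegrableOn (fun s => min 1 (x ^ 2 * s ^ 2)) (Ioi x⁻¹) ν :=
    (int_min_one_mul hint x).mono_set (Ioi_subset_Ioi hxinv.le)
  have hsplit : auxM ν x = (∫ s in Ioc (0:ℝ) x⁻¹, min 1 (x ^ 2 * s ^ 2) ∂ν)
      + ∫ s in Ioi x⁻¹, min 1 (x ^ 2 * s ^ 2) ∂ν := by
    unfold auxM
    rw [← hsetu, setIntegral_union (Ioc_disjoint_Ioi le_rfl) measurableSet_Ioi hint1 hint2]
  have hterm1 : ∫ s in Ioc (0:ℝ) x⁻¹, min 1 (x ^ 2 * s ^ 2) ∂ν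
      = ∫ s in Ioc (0:ℝ) x⁻¹, x ^ 2 * s ^ 2 ∂ν := by
    apply setIntegral_congr_fun measurableSet_Ioc
    intro s hs
    have hs0 : (0:ℝ) < s := hs.1
    have hxs : x * s ≤ 1 := by
      calc x * s ≤ x * x⁻¹ := mul_le_mul_of_nonneg_left hs.2 hx0.le
      _ = 1 := mul_inv_cancel₀ (ne_of_gt hx0)
    have hxs0 : 0 ≤ x * s := by positivity
    have hsq := mul_le_mul hxs hxs hxs0 zero_le_one
    have : x ^ 2 * s ^ 2 ≤ 1 := by nlinarith [hsq]
    exact min_eq_right this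
  have hterm2 : ∫ s in Ioi x⁻¹, min 1 (x ^ 2 * s ^ 2) ∂ν = (ν (Ioi x⁻¹)).toReal := by
    have h1 : ∫ s in Ioi x⁻¹, min 1 (x ^ 2 * s ^ 2) ∂ν = ∫ _ in Ioi x⁻¹, (1:ℝ) ∂ν := by
      apply setIntegral_congr_fun measurableSet_Ioi
      intro s hs
      have hs0 : x⁻¹ < s := hs
      have hxs : 1 ≤ x * s := by
        rw [← mul_inv_cancel₀ (ne_of_gt hx0)]
        exact mul_le_mul_of_nonneg_left hs0.le hx0.le
      have : (1:ℝ) ≤ x ^ 2 * s ^ 2 := by nlinarith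
      exact min_eq_left this
    rw [h1, setIntegral_const, smul_eq_mul, mul_one]; rfl
  have hlow := Phi_lower (σ := σ) hint hφ'' hx0
  have htail := hCT x hx
  have hΦle : bigPhi φ'' x ≤ runSup (bigPhi φ'') x :=
    le_runSup (bddAbove_bigPhi hint hφ'') ⟨hx0, le_rfl⟩
  have hrs0 : 0 ≤ runSup (bigPhi φ'') x := by
    have := bigPhi_pos hint hφ'' hUV hx0
    linarith
  unfold auxG
  rw [hsplit, hterm1, hterm2]
  have h4 : σ ^ 2 * x ^ 2 + ∫ s in Ioc (0:ℝ) x⁻¹, x ^ 2 * s ^ 2 ∂ν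
      ≤ 4 * runSup (bigPhi φ'') x := by
    calc σ ^ 2 * x ^ 2 + ∫ s in Ioc (0:ℝ) x⁻¹, x ^ 2 * s ^ 2 ∂ν ≤ 4 * bigPhi φ'' x := hlow
    _ ≤ 4 * runSup (bigPhi φ'') x := by linarith
  linarith

lemma F_unbounded (hint : ∫⁻ x in Ioi (0:ℝ), ENNReal.ofReal (min 1 (x ^ 2)) ∂ν ≠ ⊤)
    (hφ'' : ∀ l : ℝ, 0 < l → φ'' l = 2 * σ ^ 2 +
      ∫ x in Ioi (0:ℝ), x ^ 2 * Real.exp (-(l * x)) ∂ν)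
    (hUV : 0 < σ ∨ ∫⁻ x in Ioo (0:ℝ) 1, ENNReal.ofReal x ∂ν = ⊤)
    (hα : 0 < α) (hc : c ∈ Ioc (0:ℝ) 1) (hx₀ : 0 ≤ x₀)
    (hscal : WLSC φ'' (α - 2) c x₀) :
    ∀ s : ℝ, ∃ b > (0:ℝ), s < runSup (bigPhi φ'') b := by
  intro s
  set y₁ := x₀ + 1 with hy₁
  have hy₁0 : (0:ℝ) < y₁ := by linarith
  have hy₁x₀ : x₀ < y₁ := by linarith
  have hΦy₁ : 0 < bigPhi φ'' y₁ := bigPhi_pos hint hφ'' hUV hy₁0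
  have hc0 : 0 < c := hc.1
  set N := (max s 0 + 1) / (c * bigPhi φ'' y₁) with hN
  set l := (max N 1) ^ (1 / α) with hl
  have hmax1 : (1:ℝ) ≤ max N 1 := le_max_right _ _
  have hl1 : (1:ℝ) ≤ l := Real.one_le_rpow hmax1 (by positivity)
  have hl0 : (0:ℝ) < l := lt_of_lt_of_le one_pos hl1
  have hlα : l ^ α = max N 1 := by
    rw [hl, ← Real.rpow_mul (by linarith : (0:ℝ) ≤ max N 1)]
    rw [one_div, inv_mul_cancel₀ (ne_of_gt hα), Real.rpow_one]
  have hscl := bigPhi_scal hα hc hscal hy₁x₀ hl1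
  refine ⟨l * y₁, by positivity, ?_⟩
  have hmem : l * y₁ ∈ Ioc (0:ℝ) (l * y₁) := ⟨by positivity, le_rfl⟩
  have h1 : bigPhi φ'' (l * y₁) ≤ runSup (bigPhi φ'') (l * y₁) :=
    le_runSup (bddAbove_bigPhi hint hφ'') hmem
  have h2 : s < c * l ^ α * bigPhi φ'' y₁ := by
    rw [hlα]
    have h3 : N ≤ max N 1 := le_max_left _ _
    have h4 : c * N * bigPhi φ'' y₁ = max s 0 + 1 := by
      rw [hN]
      field_simp
    have h5 : c * N * bigPhi φ'' y₁ ≤ c * max N 1 * bigPhi φ'' y₁ := by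
      have := mul_le_mul_of_nonneg_left h3 hc0.le
      exact mul_le_mul_of_nonneg_right this hΦy₁.le
    have h6 : s ≤ max s 0 := le_max_left _ _
    linarith
  linarith

lemma Fstar_scal (hint : ∫⁻ x in Ioi (0:ℝ), ENNReal.ofReal (min 1 (x ^ 2)) ∂ν ≠ ⊤)
    (hφ'' : ∀ l : ℝ, 0 < l → φ'' l = 2 * σ ^ 2 +
      ∫ x in Ioi (0:ℝ), x ^ 2 * Real.exp (-(l * x)) ∂ν)
    (hUV : 0 < σ ∨ ∫⁻ x in Ioo (0:ℝ) 1, ENNReal.ofReal x ∂ν = ⊤)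
    (hα : 0 < α) (hc : c ∈ Ioc (0:ℝ) 1) (hx₀ : 0 ≤ x₀)
    (hscal : WLSC φ'' (α - 2) c x₀) :
    ∃ x₁ : ℝ, x₀ ≤ x₁ ∧ (x₀ = 0 → x₁ = 0) ∧
      ∀ x, x₁ < x → ∀ l, 1 ≤ l →
        c * l ^ α * runSup (bigPhi φ'') x ≤ runSup (bigPhi φ'') (l * x) := by
  have hc0 : 0 < c := hc.1
  have hbF := bddAbove_bigPhi (σ := σ) (ν := ν) hint hφ''
  -- generic step: if every point of Ioc producing the sup is > x₀ we can scale
  have hkey : ∀ x : ℝ, 0 < x → ∀ l : ℝ, 1 ≤ l → ∀ y, y ∈ Ioc x₀ x →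
      c * l ^ α * bigPhi φ'' y ≤ runSup (bigPhi φ'') (l * x) := by
    intro x hx l hl y hy
    have hl0 : (0:ℝ) < l := lt_of_lt_of_le one_pos hl
    have hy0 : 0 < y := lt_of_le_of_lt hx₀ hy.1
    calc c * l ^ α * bigPhi φ'' y ≤ bigPhi φ'' (l * y) := bigPhi_scal hα hc hscal hy.1 hl
    _ ≤ runSup (bigPhi φ'') (l * x) := by
        apply le_runSup hbF
        constructor
        · positivity
        · exact mul_le_mul_of_nonneg_left hy.2 hl0.le
  rcases eq_or_lt_of_le hx₀ with h0 | hpos₀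
  · -- x₀ = 0
    refine ⟨0, le_of_eq h0.symm, fun _ => rfl, ?_⟩
    intro x hx l hl
    have hl0 : (0:ℝ) < l := lt_of_lt_of_le one_pos hl
    have hlα0 : (0:ℝ) < l ^ α := Real.rpow_pos_of_pos hl0 _
    rw [show c * l ^ α * runSup (bigPhi φ'') x
        = runSup (bigPhi φ'') x * (c * l ^ α) by ring]
    rw [← le_div_iff₀ (by positivity)]
    apply runSup_le hx
    intro y hy
    rw [le_div_iff₀ (by positivity)]
    have := hkey x hx l hl y (by rw [← h0]; exact hy)
    linarith
  · -- x₀ > 0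
    have hP₀ : 0 < runSup (bigPhi φ'') x₀ + 1 := by
      have h1 : bigPhi φ'' x₀ ≤ runSup (bigPhi φ'') x₀ :=
        le_runSup hbF ⟨hpos₀, le_rfl⟩
      have h2 := bigPhi_pos hint hφ'' hUV hpos₀
      linarith
    set y₁ := x₀ + 1 with hy₁def
    have hy₁0 : (0:ℝ) < y₁ := by linarith
    have hy₁x₀ : x₀ < y₁ := by linarith
    have hΦy₁ : 0 < bigPhi φ'' y₁ := bigPhi_pos hint hφ'' hUV hy₁0
    set N := (runSup (bigPhi φ'') x₀ + 1) / (c * bigPhi φ'' y₁) with hN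
    set m := (max N 1) ^ (1 / α) with hm
    have hm1 : (1:ℝ) ≤ m := Real.one_le_rpow (le_max_right _ _) (by positivity)
    have hm0 : (0:ℝ) < m := lt_of_lt_of_le one_pos hm1
    have hmα : m ^ α = max N 1 := by
      rw [hm, ← Real.rpow_mul (by positivity : (0:ℝ) ≤ max N 1)]
      rw [one_div, inv_mul_cancel₀ (ne_of_gt hα), Real.rpow_one]
    set w := m * y₁ with hw
    have hw0 : 0 < w := by positivity
    have hwx₀ : x₀ < w := by
      calc x₀ < y₁ := hy₁x₀
      _ = 1 * y₁ := (one_mul _).symm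
      _ ≤ m * y₁ := mul_le_mul_of_nonneg_right hm1 hy₁0.le
    have hΦw : runSup (bigPhi φ'') x₀ ≤ bigPhi φ'' w := by
      have h1 := bigPhi_scal hα hc hscal hy₁x₀ hm1
      have h2 : runSup (bigPhi φ'') x₀ + 1 ≤ c * m ^ α * bigPhi φ'' y₁ := by
        rw [hmα]
        have h3 : N ≤ max N 1 := le_max_left _ _
        have h4 : c * N * bigPhi φ'' y₁ = runSup (bigPhi φ'') x₀ + 1 := by
          rw [hN]; field_simp
        have h5 : c * N * bigPhi φ'' y₁ ≤ c * max N 1 * bigPhi φ'' y₁ := by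
          have := mul_le_mul_of_nonneg_left h3 hc0.le
          exact mul_le_mul_of_nonneg_right this hΦy₁.le
        linarith
      linarith
    refine ⟨w, (le_of_lt hwx₀), fun h => absurd h (ne_of_gt hpos₀), ?_⟩
    intro x hx l hl
    have hx0 : 0 < x := hw0.trans hx
    have hl0 : (0:ℝ) < l := lt_of_lt_of_le one_pos hl
    have hlα0 : (0:ℝ) < l ^ α := Real.rpow_pos_of_pos hl0 _
    -- every value of bigPhi on Ioc 0 x is dominated via points in Ioc x₀ x
    rw [show c * l ^ α * runSup (bigPhi φ'') x
        = runSup (bigPhi φ'') x * (c * l ^ α) by ring]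
    rw [← le_div_iff₀ (by positivity)]
    apply runSup_le hx0
    intro y hy
    rw [le_div_iff₀ (by positivity)]
    rcases le_or_gt y x₀ with hyx₀ | hyx₀
    · -- bigPhi y ≤ runSup x₀ ≤ bigPhi w, and w ∈ Ioc x₀ x
      have h1 : bigPhi φ'' y ≤ runSup (bigPhi φ'') x₀ := le_runSup hbF ⟨hy.1, hyx₀⟩
      have h2 := hkey x hx0 l hl w ⟨hwx₀, hx.le⟩
      have h3 : c * l ^ α * bigPhi φ'' y ≤ c * l ^ α * bigPhi φ'' w := by
        apply mul_le_mul_of_nonneg_left _ (by positivity)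
        linarith
      calc bigPhi φ'' y * (c * l ^ α) = c * l ^ α * bigPhi φ'' y := by ring
      _ ≤ c * l ^ α * bigPhi φ'' w := h3
      _ ≤ runSup (bigPhi φ'') (l * x) := h2
    · have h2 := hkey x hx0 l hl y ⟨hyx₀, hy.2⟩
      calc bigPhi φ'' y * (c * l ^ α) = c * l ^ α * bigPhi φ'' y := by ring
      _ ≤ runSup (bigPhi φ'') (l * x) := h2

end Assembly

/-- Proposition 8. -/
theorem statement13
    (ν : Measure ℝ) [SigmaFinite ν]
    (hint : ∫⁻ x in Ioi (0:ℝ), ENNReal.ofReal (min 1 (x ^ 2)) ∂ν ≠ ⊤)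
    (σ b : ℝ) (hσ : 0 ≤ σ)
    (φ φ' φ'' : ℝ → ℝ)
    (hφ : ∀ l : ℝ, 0 ≤ l → φ l = σ ^ 2 * l ^ 2 - b * l +
      ∫ x in Ioi (0:ℝ), (Real.exp (-(l * x)) - 1 + l * x * (if x < 1 then 1 else 0)) ∂ν)
    (hD1 : ∀ x : ℝ, 0 < x → HasDerivAt φ (φ' x) x)
    (hD2 : ∀ x : ℝ, 0 < x → HasDerivAt φ' (φ'' x) x)
    (hφ'' : ∀ l : ℝ, 0 < l → φ'' l = 2 * σ ^ 2 + ∫ x in Ioi (0:ℝ), x ^ 2 * Real.exp (-(l * x)) ∂ν)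
    (hUV : 0 < σ ∨ ∫⁻ x in Ioo (0:ℝ) 1, ENNReal.ofReal x ∂ν = ⊤)
    (α c x₀ : ℝ) (hα : 0 < α) (hc : c ∈ Ioc (0:ℝ) 1) (hx₀ : 0 ≤ x₀)
    (hscal : WLSC φ'' (α - 2) c x₀) :
    (∃ C : ℝ, 1 ≤ C ∧ ∀ x : ℝ, x₀ < x →
      C⁻¹ * bigPhiStar φ'' x ≤ psiStar σ ν x ∧ psiStar σ ν x ≤ C * bigPhiStar φ'' x) ∧
    (∃ C : ℝ, 1 ≤ C ∧ ∀ r : ℝ, bigPhi φ'' x₀ < r →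
      C⁻¹ * bigPhiInv φ'' r ≤ psiInv σ ν r ∧ psiInv σ ν r ≤ C * bigPhiInv φ'' r) ∧
    (∃ C : ℝ, 1 ≤ C ∧ ∀ l : ℝ, 1 ≤ l → ∀ r : ℝ, bigPhi φ'' x₀ < r →
      bigPhiInv φ'' (l * r) ≤ C * l ^ (1 / α) * bigPhiInv φ'' r) := by
  have hc0 : 0 < c := hc.1
  have hc1 : c ≤ 1 := hc.2
  have hbF := bddAbove_bigPhi (σ := σ) hint hφ''
  have hbG := bddAbove_rePsi_Ioc hint σ
  have hψG : ∀ r : ℝ, 0 < r → psiStar σ ν r = runSup (rePsi σ ν) r :=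
    fun r hr => psiStar_eq_runSup hint σ hr
  have hΦF : ∀ r : ℝ, bigPhiStar φ'' r = runSup (bigPhi φ'') r := fun r => rfl
  set F := runSup (bigPhi φ'') with hFdef
  set G := runSup (rePsi σ ν) with hGdef
  have hFpos : ∀ x : ℝ, 0 < x → 0 < F x := by
    intro x hx
    have h1 : bigPhi φ'' x ≤ F x := le_runSup hbF ⟨hx, le_rfl⟩
    have := bigPhi_pos hint hφ'' hUV hx
    linarith
  have hF4g : ∀ x : ℝ, 0 < x → F x ≤ 4 * auxG σ ν x := by
    intro x hx
    apply runSup_le hx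
    intro y hy
    calc bigPhi φ'' y ≤ 4 * auxG σ ν y := bigPhi_le_four_g hint hφ'' hy.1
    _ ≤ 4 * auxG σ ν x := by
        have := auxG_mono (σ := σ) hint hy.1.le hy.2
        linarith
  have hG2g : ∀ x : ℝ, 0 < x → G x ≤ 2 * auxG σ ν x := by
    intro x hx
    have h1 : psiStar σ ν x ≤ 2 * auxG σ ν x := psiStar_le_two_g hint σ hx
    rw [hψG x hx] at h1
    exact h1
  have hFleG : ∀ x : ℝ, 0 < x → F x ≤ 84 * G x := by
    intro x hx
    have h1 := hF4g x hx
    have h2 : auxG σ ν x ≤ 21 * psiStar σ ν x := auxG_le_psiStar hint σ hx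
    rw [hψG x hx] at h2
    linarith
  have hGpos : ∀ x : ℝ, 0 < x → 0 < G x := by
    intro x hx
    have := hFleG x hx
    have := hFpos x hx
    linarith
  obtain ⟨C₀', hC₀'1, hGC⟩ := auxG_le_CPhi hint hφ'' hUV hα hc hx₀ hscal
  set C₀ := 2 * C₀' with hC₀def
  have hC₀1 : 1 ≤ C₀ := by rw [hC₀def]; linarith
  have hGleF : ∀ x : ℝ, x₀ < x → G x ≤ C₀ * F x := by
    intro x hx
    have hx0 : (0:ℝ) < x := lt_of_le_of_lt hx₀ hx
    have h1 := hG2g x hx0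
    have h2 := hGC x hx
    rw [hC₀def]
    linarith
  have hcontF : ContinuousOn F (Ioi (0:ℝ)) := runSup_contOn (bigPhi_contOn hint hφ'') hbF
  have hcontG : ContinuousOn G (Ioi (0:ℝ)) := runSup_contOn (rePsi_contOn hint σ) hbG
  have hlowF : ∀ s > (0:ℝ), ∃ b > (0:ℝ), F b < s := by
    intro s hs
    have htz := auxG_tendsto_zero hint σ
    have hev : ∀ᶠ r in nhdsWithin 0 (Ioi (0:ℝ)), auxG σ ν r < s / 8 :=
      htz.eventually_lt_const (by linarith)
    obtain ⟨b, hb1, hb2⟩ := (hev.and self_mem_nhdsWithin).exists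
    refine ⟨b, hb2, ?_⟩
    have := hF4g b hb2
    linarith
  have hlowG : ∀ s > (0:ℝ), ∃ b > (0:ℝ), G b < s := by
    intro s hs
    have htz := auxG_tendsto_zero hint σ
    have hev : ∀ᶠ r in nhdsWithin 0 (Ioi (0:ℝ)), auxG σ ν r < s / 8 :=
      htz.eventually_lt_const (by linarith)
    obtain ⟨b, hb1, hb2⟩ := (hev.and self_mem_nhdsWithin).exists
    refine ⟨b, hb2, ?_⟩
    have := hG2g b hb2
    linarith
  have hhighF : ∀ s : ℝ, ∃ b > (0:ℝ), s < F b := F_unbounded hint hφ'' hUV hα hc hx₀ hscal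
  have hhighG : ∀ s : ℝ, ∃ b > (0:ℝ), s < G b := by
    intro s
    obtain ⟨b, hb0, hb⟩ := hhighF (84 * max s 0 + 84)
    refine ⟨b, hb0, ?_⟩
    have h1 := hFleG b hb0
    have h2 : s ≤ max s 0 := le_max_left _ _
    linarith
  obtain ⟨x₁, hx₀x₁, hx₁zero, hFscal⟩ := Fstar_scal hint hφ'' hUV hα hc hx₀ hscal
  have hFinv : ∀ r : ℝ, 0 < r → 0 < bigPhiInv φ'' r ∧ F (bigPhiInv φ'' r) = r ∧
      ∀ t, bigPhiInv φ'' r < t → r < F t := by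
    intro r hr
    exact runSup_inv (bigPhi_contOn hint hφ'') hbF hlowF hhighF hr
  have hGinv : ∀ r : ℝ, 0 < r → 0 < psiInv σ ν r ∧ G (psiInv σ ν r) = r ∧
      ∀ t, psiInv σ ν r < t → r < G t := by
    intro r hr
    have hseteq : {t : ℝ | 0 < t ∧ psiStar σ ν t = r}
        = {t : ℝ | 0 < t ∧ runSup (rePsi σ ν) t = r} := by
      ext t
      simp only [mem_setOf_eq]
      constructor
      · rintro ⟨h1, h2⟩
        refine ⟨h1, ?_⟩
        show G t = r
        rw [← hψG t h1]
        exact h2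
      · rintro ⟨h1, h2⟩
        refine ⟨h1, ?_⟩
        rw [hψG t h1]
        exact h2
    have h := runSup_inv (rePsi_contOn hint σ) hbG hlowG hhighG hr
    unfold psiInv
    rw [hseteq]
    exact h
  have hr0of : ∀ r : ℝ, bigPhi φ'' x₀ < r → 0 < r := by
    intro r hr
    rcases eq_or_lt_of_le hx₀ with h0 | hp
    · have hz : bigPhi φ'' x₀ = 0 := by
        rw [← h0]
        unfold bigPhi
        ring
      linarith
    · have := bigPhi_pos hint hφ'' hUV hp
      linarith
  set a := x₁ + 1 with hadef
  have hx₁0 : 0 ≤ x₁ := le_trans hx₀ hx₀x₁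
  have ha0 : (0:ℝ) < a := by rw [hadef]; linarith
  have hax₁ : x₁ < a := by rw [hadef]; linarith
  set R := max (F a) (G a) with hRdef
  obtain ⟨Tv, hTv0, hTvR⟩ := hhighF R
  obtain ⟨Tu, hTu0, hTuR⟩ := hhighG R
  obtain ⟨δv, hδv0, hδvP⟩ : ∃ δ > (0:ℝ), (0 < x₀ → F δ < bigPhi φ'' x₀) := by
    rcases eq_or_lt_of_le hx₀ with h0 | hp
    · refine ⟨1, one_pos, fun h => absurd h ?_⟩
      rw [← h0]
      exact lt_irrefl 0
    · obtain ⟨δ, hδ0, hδ⟩ := hlowF (bigPhi φ'' x₀) (bigPhi_pos hint hφ'' hUV hp)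
      exact ⟨δ, hδ0, fun _ => hδ⟩
  obtain ⟨δu, hδu0, hδuP⟩ : ∃ δ > (0:ℝ), (0 < x₀ → G δ < bigPhi φ'' x₀) := by
    rcases eq_or_lt_of_le hx₀ with h0 | hp
    · refine ⟨1, one_pos, fun h => absurd h ?_⟩
      rw [← h0]
      exact lt_irrefl 0
    · obtain ⟨δ, hδ0, hδ⟩ := hlowG (bigPhi φ'' x₀) (bigPhi_pos hint hφ'' hUV hp)
      exact ⟨δ, hδ0, fun _ => hδ⟩
  set CA1 := (C₀ / c) ^ (1 / α) with hCA1def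
  set CA2 := ((84:ℝ) / c) ^ (1 / α) with hCA2def
  have hCA1ge1 : (1:ℝ) ≤ CA1 := by
    apply Real.one_le_rpow _ (by positivity)
    rw [le_div_iff₀ hc0]
    linarith
  have hCA2ge1 : (1:ℝ) ≤ CA2 := by
    apply Real.one_le_rpow _ (by positivity)
    rw [le_div_iff₀ hc0]
    linarith
  refine ⟨?_, ?_, ?_⟩
  · -- part (i)
    refine ⟨max 84 C₀, le_trans (by norm_num) (le_max_left _ _), ?_⟩
    intro x hx
    have hx0 : (0:ℝ) < x := lt_of_le_of_lt hx₀ hx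
    have hmaxpos : (0:ℝ) < max 84 C₀ := lt_of_lt_of_le (by norm_num) (le_max_left _ _)
    constructor
    · rw [hΦF, hψG x hx0]
      rw [inv_mul_le_iff₀ hmaxpos]
      have h1 := hFleG x hx0
      have hG0 := (hGpos x hx0).le
      calc F x ≤ 84 * G x := h1
      _ ≤ max 84 C₀ * G x := mul_le_mul_of_nonneg_right (le_max_left _ _) hG0
    · rw [hΦF, hψG x hx0]
      have h1 := hGleF x hx
      have hF0 := (hFpos x hx0).le
      calc G x ≤ C₀ * F x := h1
      _ ≤ max 84 C₀ * F x := mul_le_mul_of_nonneg_right (le_max_right _ _) hF0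
  · -- part (ii)
    set C₂ := max 1 (max (max CA1 CA2) (max (Tv / δu) (Tu / δv))) with hC₂def
    have hC₂1 : (1:ℝ) ≤ C₂ := le_max_left _ _
    have hC₂0 : (0:ℝ) < C₂ := lt_of_lt_of_le one_pos hC₂1
    refine ⟨C₂, hC₂1, ?_⟩
    intro r hr
    have hr0 : 0 < r := hr0of r hr
    obtain ⟨hv0, hvF, hvafter⟩ := hFinv r hr0
    obtain ⟨hu0, huG, huafter⟩ := hGinv r hr0
    set v := bigPhiInv φ'' r with hvdef
    set u := psiInv σ ν r with hudef
    have hAcase : x₁ < u → x₁ < v → x₀ < u → v ≤ C₂ * u ∧ u ≤ C₂ * v := by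
      intro h₁u h₁v h₀u
      constructor
      · rcases le_or_gt v u with h | h
        · calc v ≤ u := h
          _ = 1 * u := (one_mul u).symm
          _ ≤ C₂ * u := mul_le_mul_of_nonneg_right hC₂1 hu0.le
        · set m := v / u with hmdef
          have hm1 : 1 ≤ m := by
            rw [hmdef, le_div_iff₀ hu0]
            linarith
          have hmv : v = m * u := by
            rw [hmdef]
            field_simp
          have h1 : c * m ^ α * F u ≤ F (m * u) := hFscal u h₁u m hm1
          rw [← hmv, hvF] at h1
          have h4 : G u ≤ C₀ * F u := hGleF u h₀u
          rw [huG] at h4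
          have hFu0 : 0 < F u := hFpos u hu0
          have h5 : (c * m ^ α) * F u ≤ C₀ * F u := by
            calc (c * m ^ α) * F u = c * m ^ α * F u := by ring
            _ ≤ r := h1
            _ ≤ C₀ * F u := h4
          have h5' : c * m ^ α ≤ C₀ := le_of_mul_le_mul_right h5 hFu0
          have h6 : m ^ α ≤ C₀ / c := by
            rw [le_div_iff₀ hc0]
            linarith
          have h7 : m ≤ CA1 := le_rpow_inv_of_rpow_le hα (by linarith) h6
          calc v = m * u := hmv
          _ ≤ CA1 * u := mul_le_mul_of_nonneg_right h7 hu0.le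
          _ ≤ C₂ * u := by
              apply mul_le_mul_of_nonneg_right _ hu0.le
              calc CA1 ≤ max CA1 CA2 := le_max_left _ _
              _ ≤ max (max CA1 CA2) (max (Tv / δu) (Tu / δv)) := le_max_left _ _
              _ ≤ C₂ := le_max_right _ _
      · rcases le_or_gt u v with h | h
        · calc u ≤ v := h
          _ = 1 * v := (one_mul v).symm
          _ ≤ C₂ * v := mul_le_mul_of_nonneg_right hC₂1 hv0.le
        · set m := u / v with hmdef
          have hm1 : 1 ≤ m := by
            rw [hmdef, le_div_iff₀ hv0]
            linarith
          have hmv : u = m * v := by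
            rw [hmdef]
            field_simp
          have h1 : c * m ^ α * F v ≤ F (m * v) := hFscal v h₁v m hm1
          rw [← hmv, hvF] at h1
          have h4 : F u ≤ 84 * G u := hFleG u hu0
          rw [huG] at h4
          have h5 : (c * m ^ α) * r ≤ 84 * r := by
            calc (c * m ^ α) * r = c * m ^ α * r := by ring
            _ ≤ F u := h1
            _ ≤ 84 * r := h4
          have h5' : c * m ^ α ≤ 84 := le_of_mul_le_mul_right h5 hr0
          have h6 : m ^ α ≤ 84 / c := by
            rw [le_div_iff₀ hc0]
            linarith
          have h7 : m ≤ CA2 := le_rpow_inv_of_rpow_le hα (by linarith) h6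
          calc u = m * v := hmv
          _ ≤ CA2 * v := mul_le_mul_of_nonneg_right h7 hv0.le
          _ ≤ C₂ * v := by
              apply mul_le_mul_of_nonneg_right _ hv0.le
              calc CA2 ≤ max CA1 CA2 := le_max_right _ _
              _ ≤ max (max CA1 CA2) (max (Tv / δu) (Tu / δv)) := le_max_left _ _
              _ ≤ C₂ := le_max_right _ _
    have main : v ≤ C₂ * u ∧ u ≤ C₂ * v := by
      rcases le_or_gt r R with hrR | hRr
      · rcases eq_or_lt_of_le hx₀ with h0 | hp
        · have hx₁z := hx₁zero h0.symm
          exact hAcase (by rw [hx₁z]; exact hu0) (by rw [hx₁z]; exact hv0)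
            (by rw [← h0]; exact hu0)
        · have hPx₀ : 0 < bigPhi φ'' x₀ := bigPhi_pos hint hφ'' hUV hp
          have hvTv : v ≤ Tv := by
            by_contra hcon
            push_neg at hcon
            have h1 : F Tv ≤ F v := runSup_mono hbF hTv0 hcon.le
            rw [hvF] at h1
            linarith
          have huTu : u ≤ Tu := by
            by_contra hcon
            push_neg at hcon
            have h1 : G Tu ≤ G u := runSup_mono hbG hTu0 hcon.le
            rw [huG] at h1
            linarith
          have hδvv : δv < v := by
            by_contra hcon
            push_neg at hcon
            have h1 : F v ≤ F δv := runSup_mono hbF hv0 hcon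
            rw [hvF] at h1
            have h2 := hδvP hp
            linarith
          have hδuu : δu < u := by
            by_contra hcon
            push_neg at hcon
            have h1 : G u ≤ G δu := runSup_mono hbG hu0 hcon
            rw [huG] at h1
            have h2 := hδuP hp
            linarith
          constructor
          · have hq1 : Tv / δu ≤ C₂ := by
              calc Tv / δu ≤ max (Tv / δu) (Tu / δv) := le_max_left _ _
              _ ≤ max (max CA1 CA2) (max (Tv / δu) (Tu / δv)) := le_max_right _ _
              _ ≤ C₂ := le_max_right _ _
            calc v ≤ Tv := hvTv
            _ = (Tv / δu) * δu := by field_simp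
            _ ≤ (Tv / δu) * u := mul_le_mul_of_nonneg_left hδuu.le (by positivity)
            _ ≤ C₂ * u := mul_le_mul_of_nonneg_right hq1 hu0.le
          · have hq1 : Tu / δv ≤ C₂ := by
              calc Tu / δv ≤ max (Tv / δu) (Tu / δv) := le_max_right _ _
              _ ≤ max (max CA1 CA2) (max (Tv / δu) (Tu / δv)) := le_max_right _ _
              _ ≤ C₂ := le_max_right _ _
            calc u ≤ Tu := huTu
            _ = (Tu / δv) * δv := by field_simp
            _ ≤ (Tu / δv) * v := mul_le_mul_of_nonneg_left hδvv.le (by positivity)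
            _ ≤ C₂ * v := mul_le_mul_of_nonneg_right hq1 hv0.le
      · have hva : a < v := by
          by_contra hcon
          push_neg at hcon
          have h1 : F v ≤ F a := runSup_mono hbF hv0 hcon
          rw [hvF] at h1
          have h2 : r ≤ R := le_trans h1 (le_max_left _ _)
          linarith
        have hua : a < u := by
          by_contra hcon
          push_neg at hcon
          have h1 : G u ≤ G a := runSup_mono hbG hu0 hcon
          rw [huG] at h1
          have h2 : r ≤ R := le_trans h1 (le_max_right _ _)
          linarith
        exact hAcase (lt_trans hax₁ hua) (lt_trans hax₁ hva)
          (lt_of_le_of_lt hx₀x₁ (lt_trans hax₁ hua))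
    obtain ⟨hmain1, hmain2⟩ := main
    constructor
    · rw [inv_mul_le_iff₀ hC₂0]
      exact hmain1
    · exact hmain2
  · -- part (iii)
    set C₃ := max 1 (max ((1 / c) ^ (1 / α))
      (max (a * (1 / c) ^ (1 / α) / δv) (a / δv))) with hC₃def
    have hC₃1 : (1:ℝ) ≤ C₃ := le_max_left _ _
    have hC₃0 : (0:ℝ) < C₃ := lt_of_lt_of_le one_pos hC₃1
    refine ⟨C₃, hC₃1, ?_⟩
    intro l hl r hr
    have hr0 : 0 < r := hr0of r hr
    have hl0 : (0:ℝ) < l := lt_of_lt_of_le one_pos hl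
    have hlr0 : 0 < l * r := by positivity
    obtain ⟨hv0, hvF, hvafter⟩ := hFinv r hr0
    obtain ⟨hw0, hwF, hwafter⟩ := hFinv (l * r) hlr0
    set v := bigPhiInv φ'' r with hvdef
    set w := bigPhiInv φ'' (l * r) with hwdef
    have hl1α : (1:ℝ) ≤ l ^ (1 / α) := Real.one_le_rpow hl (by positivity)
    have hcinv1 : (1:ℝ) ≤ (1 / c) ^ (1 / α) := by
      apply Real.one_le_rpow _ (by positivity)
      rw [le_div_iff₀ hc0]
      linarith
    have hdivrpow : ∀ m : ℝ, 1 ≤ m → m ^ α ≤ l / c → m ≤ l ^ (1 / α) * (1 / c) ^ (1 / α) := by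
      intro m hm1 h6
      have h7 : m ≤ (l / c) ^ (1 / α) := le_rpow_inv_of_rpow_le hα (by linarith) h6
      have h8 : (l / c) ^ (1 / α) = l ^ (1 / α) * (1 / c) ^ (1 / α) := by
        rw [show l / c = l * (1 / c) by field_simp]
        exact Real.mul_rpow hl0.le (by positivity)
      rw [h8] at h7
      exact h7
    have hAiii : x₁ < v → w ≤ C₃ * l ^ (1 / α) * v := by
      intro h₁v
      rcases le_or_gt w v with h | h
      · have h1 : (1:ℝ) * 1 ≤ C₃ * l ^ (1 / α) :=
          mul_le_mul hC₃1 hl1α zero_le_one hC₃0.le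
        calc w ≤ v := h
        _ = 1 * 1 * v := by ring
        _ ≤ C₃ * l ^ (1 / α) * v := by
            apply mul_le_mul_of_nonneg_right _ hv0.le
            linarith
      · set m := w / v with hmdef
        have hm1 : 1 ≤ m := by
          rw [hmdef, le_div_iff₀ hv0]
          linarith
        have hmw : w = m * v := by
          rw [hmdef]
          field_simp
        have h1 : c * m ^ α * F v ≤ F (m * v) := hFscal v h₁v m hm1
        rw [← hmw, hwF, hvF] at h1
        have h5 : (c * m ^ α) * r ≤ l * r := by
          calc (c * m ^ α) * r = c * m ^ α * r := by ring
          _ ≤ l * r := h1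
        have h5' : c * m ^ α ≤ l := le_of_mul_le_mul_right h5 hr0
        have h6 : m ^ α ≤ l / c := by
          rw [le_div_iff₀ hc0]
          linarith
        have h7 := hdivrpow m hm1 h6
        have hq1 : (1 / c) ^ (1 / α) ≤ C₃ := by
          calc (1 / c) ^ (1 / α)
              ≤ max ((1 / c) ^ (1 / α)) (max (a * (1 / c) ^ (1 / α) / δv) (a / δv)) :=
                le_max_left _ _
          _ ≤ C₃ := le_max_right _ _
        calc w = m * v := hmw
        _ ≤ (l ^ (1 / α) * (1 / c) ^ (1 / α)) * v := mul_le_mul_of_nonneg_right h7 hv0.le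
        _ = ((1 / c) ^ (1 / α)) * l ^ (1 / α) * v := by ring
        _ ≤ C₃ * l ^ (1 / α) * v := by
            apply mul_le_mul_of_nonneg_right _ hv0.le
            apply mul_le_mul_of_nonneg_right hq1 (by positivity)
    rcases le_or_gt r (F a) with hrFa | hFar
    · rcases eq_or_lt_of_le hx₀ with h0 | hp
      · exact hAiii (by rw [hx₁zero h0.symm]; exact hv0)
      · have hPx₀ : 0 < bigPhi φ'' x₀ := bigPhi_pos hint hφ'' hUV hp
        have hδvv : δv < v := by
          by_contra hcon
          push_neg at hcon
          have h1 : F v ≤ F δv := runSup_mono hbF hv0 hcon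
          rw [hvF] at h1
          have h2 := hδvP hp
          linarith
        rcases le_or_gt w a with hwa | haw
        · have hq1 : a / δv ≤ C₃ := by
            calc a / δv ≤ max (a * (1 / c) ^ (1 / α) / δv) (a / δv) := le_max_right _ _
            _ ≤ max ((1 / c) ^ (1 / α)) (max (a * (1 / c) ^ (1 / α) / δv) (a / δv)) :=
                le_max_right _ _
            _ ≤ C₃ := le_max_right _ _
          calc w ≤ a := hwa
          _ = (a / δv) * δv := by field_simp
          _ ≤ (a / δv) * v := mul_le_mul_of_nonneg_left hδvv.le (by positivity)
          _ = (a / δv) * 1 * v := by ring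
          _ ≤ C₃ * l ^ (1 / α) * v := by
              apply mul_le_mul_of_nonneg_right _ hv0.le
              apply mul_le_mul hq1 hl1α zero_le_one hC₃0.le
        · have hFa0 : 0 < F a := hFpos a ha0
          set m := w / a with hmdef
          have hm1 : 1 ≤ m := by
            rw [hmdef, le_div_iff₀ ha0]
            linarith
          have hmw : w = m * a := by
            rw [hmdef]
            field_simp
          have h1 : c * m ^ α * F a ≤ F (m * a) := hFscal a hax₁ m hm1
          rw [← hmw, hwF] at h1
          have h2 : l * r ≤ l * F a := mul_le_mul_of_nonneg_left hrFa hl0.le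
          have h5 : (c * m ^ α) * F a ≤ l * F a := by
            calc (c * m ^ α) * F a = c * m ^ α * F a := by ring
            _ ≤ l * r := h1
            _ ≤ l * F a := h2
          have h5' : c * m ^ α ≤ l := le_of_mul_le_mul_right h5 hFa0
          have h6 : m ^ α ≤ l / c := by
            rw [le_div_iff₀ hc0]
            linarith
          have h7 := hdivrpow m hm1 h6
          have hq1 : a * (1 / c) ^ (1 / α) / δv ≤ C₃ := by
            calc a * (1 / c) ^ (1 / α) / δv
                ≤ max (a * (1 / c) ^ (1 / α) / δv) (a / δv) := le_max_left _ _
            _ ≤ max ((1 / c) ^ (1 / α)) (max (a * (1 / c) ^ (1 / α) / δv) (a / δv)) :=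
                le_max_right _ _
            _ ≤ C₃ := le_max_right _ _
          calc w = m * a := hmw
          _ ≤ (l ^ (1 / α) * (1 / c) ^ (1 / α)) * a := mul_le_mul_of_nonneg_right h7 ha0.le
          _ = (a * (1 / c) ^ (1 / α) / δv) * l ^ (1 / α) * δv := by
              field_simp
          _ ≤ (a * (1 / c) ^ (1 / α) / δv) * l ^ (1 / α) * v := by
              apply mul_le_mul_of_nonneg_left hδvv.le
              positivity
          _ ≤ C₃ * l ^ (1 / α) * v := by
              apply mul_le_mul_of_nonneg_right _ hv0.le
              apply mul_le_mul_of_nonneg_right hq1 (by positivity)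
    · have hva : a < v := by
        by_contra hcon
        push_neg at hcon
        have h1 : F v ≤ F a := runSup_mono hbF hv0 hcon
        rw [hvF] at h1
        linarith
      exact hAiii (lt_trans hax₁ hva)

end
end
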